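/- arXiv:1509.03737 — 6 statements merged into one kernel-verified Lean document; each statement's English description precedes it below -/
import Mathlib

section
/- Let Z follow a noncentral chi-squared distribution with ν degrees of freedom and noncentrality parameter ρ. Then for every x ≥ 0, P(Z ≤ ρ + ν − 2√((ν+2ρ)x)) ≤ e^{−x}. Consequently, for any threshold θ ≤ ρ + ν, P(Z ≤ θ) ≤ exp(−(ν+ρ−θ)²/(4(ν+2ρ))). -/
open MeasureTheory ProbabilityTheory

/-- `Z` follows a noncentral chi-squared distribution with `ν` degrees of freedom and
noncentrality `ρ` (under `μ`): `Z` is the squared norm of a `ν`-dimensional Gaussian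
vector with identity covariance whose mean has squared norm `ρ`. -/
def IsNoncentralChiSq {Ω : Type*} [MeasurableSpace Ω] (μ : Measure Ω)
    (Z : Ω → ℝ) (ρ : ℝ) (ν : ℕ) : Prop :=
  ∃ (X : Ω → Fin ν → ℝ) (m : Fin ν → ℝ),
    iIndepFun (fun i ω => X ω i) μ ∧
    (∀ i, μ.map (fun ω => X ω i) = gaussianReal (m i) 1) ∧
    ρ = ∑ i, m i ^ 2 ∧
    ∀ ω, Z ω = ∑ i, X ω i ^ 2

/-- Quadratic lower bound for the logarithm: `u - u²/2 ≤ log (1+u)` for `u ≥ 0`. -/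
lemma log_quad_lower {u : ℝ} (hu : 0 ≤ u) : u - u ^ 2 / 2 ≤ Real.log (1 + u) := by
  set g : ℝ → ℝ := fun x => Real.log (1 + x) - (x - x ^ 2 / 2) with hg
  have hderiv : ∀ x : ℝ, 0 < x → HasDerivAt g (1 / (1 + x) - (1 - x)) x := by
    intro x hx
    have h1 : HasDerivAt (fun y : ℝ => 1 + y) 1 x := by
      simpa using (hasDerivAt_id x).const_add (1 : ℝ)
    have h2 : HasDerivAt (fun y : ℝ => Real.log (1 + y)) (1 / (1 + x)) x := by
      simpa using h1.log (by positivity)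
    have h3 : HasDerivAt (fun y : ℝ => y - y ^ 2 / 2) (1 - x) x := by
      have h4 := (hasDerivAt_id x).sub ((hasDerivAt_pow 2 x).div_const 2)
      exact (by simpa using h4 : HasDerivAt (id - fun y : ℝ => y ^ 2 / 2) (1 - x) x)
    exact h2.sub h3
  have hmono : MonotoneOn g (Set.Ici (0 : ℝ)) := by
    apply monotoneOn_of_deriv_nonneg (convex_Ici 0)
    · apply ContinuousOn.sub
      · apply ContinuousOn.log (by fun_prop)
        intro x hx
        have : (0:ℝ) ≤ x := hx
        positivity
      · fun_prop
    · intro x hx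
      rw [interior_Ici] at hx
      exact ((hderiv x hx).differentiableAt).differentiableWithinAt
    · intro x hx
      rw [interior_Ici] at hx
      rw [(hderiv x hx).deriv]
      have hx' : (0:ℝ) < x := hx
      have h1x : (0:ℝ) < 1 + x := by linarith
      have : 1 / (1 + x) - (1 - x) = x ^ 2 / (1 + x) := by field_simp; ring
      rw [this]
      positivity
  have h0 : g 0 = 0 := by simp [hg]
  have := hmono (Set.self_mem_Ici) (Set.mem_Ici.mpr hu) hu
  rw [h0] at this
  simp only [hg] at this
  linarith

/-- `exp (u - u²/2) ≤ 1 + u` for `u ≥ 0`. -/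
lemma exp_quad_le {u : ℝ} (hu : 0 ≤ u) : Real.exp (u - u ^ 2 / 2) ≤ 1 + u := by
  have h := log_quad_lower hu
  have h1 : (0:ℝ) < 1 + u := by linarith
  calc Real.exp (u - u ^ 2 / 2) ≤ Real.exp (Real.log (1 + u)) := Real.exp_le_exp.mpr h
    _ = 1 + u := Real.exp_log h1

/-- a.e. modification preserves joint independence. -/
lemma iIndepFun_ae_congr {Ω : Type*} [MeasurableSpace Ω] {μ : Measure Ω} {ι : Type*}
    [Countable ι] {f g : ι → Ω → ℝ}
    (hf : iIndepFun f μ) (h : ∀ i, f i =ᵐ[μ] g i) :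
    iIndepFun g μ := by
  rw [iIndepFun_iff_measure_inter_preimage_eq_mul] at hf ⊢
  intro S sets hsets
  have hae : ∀ᵐ ω ∂μ, ∀ i, f i ω = g i ω := ae_all_iff.mpr h
  have h1 : ∀ i, μ (f i ⁻¹' sets i) = μ (g i ⁻¹' sets i) := by
    intro i
    refine measure_congr (Filter.eventuallyEq_set.mpr ((h i).mono fun ω hω => ?_))
    simp [Set.mem_preimage, hω]
  have h2 : μ (⋂ i ∈ S, f i ⁻¹' sets i) = μ (⋂ i ∈ S, g i ⁻¹' sets i) := by
    refine measure_congr (Filter.eventuallyEq_set.mpr (hae.mono fun ω hω => ?_))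
    simp only [Set.mem_iInter, Set.mem_preimage]
    exact forall_congr' fun i => forall_congr' fun _ => by rw [hω i]
  rw [← h2, hf S hsets]
  exact Finset.prod_congr rfl fun i _ => h1 i

/-- Laplace transform of the square of a standard Gaussian with mean `m`. -/
lemma integral_exp_neg_sq_gaussian (m t : ℝ) (ht : t ≤ 0) :
    ∫ x, Real.exp (t * x ^ 2) ∂(gaussianReal m 1) =
      Real.exp (t * m ^ 2 / (1 - 2 * t)) / Real.sqrt (1 - 2 * t) := by
  have h1 : (0:ℝ) < 1 - 2 * t := by linarith
  have hb : (0:ℝ) < (1 - 2 * t) / 2 := by linarith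
  have hkey : ∀ x : ℝ, gaussianPDFReal m 1 x * Real.exp (t * x ^ 2)
      = ((Real.sqrt (2 * Real.pi))⁻¹ * Real.exp (t * m ^ 2 / (1 - 2 * t))) *
        Real.exp (-((1 - 2 * t) / 2) * (x - m / (1 - 2 * t)) ^ 2) := by
    intro x
    simp only [gaussianPDFReal, NNReal.coe_one, mul_one]
    rw [mul_assoc, ← Real.exp_add, mul_assoc, ← Real.exp_add]
    congr 2
    field_simp
    ring
  have hmeas : Measurable fun x => (gaussianPDFReal m 1 x).toNNReal :=
    (measurable_gaussianPDFReal m 1).real_toNNReal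
  rw [gaussianReal_of_var_ne_zero m one_ne_zero]
  have hpdf : gaussianPDF m 1 = fun x => ((gaussianPDFReal m 1 x).toNNReal : ENNReal) := rfl
  rw [hpdf, integral_withDensity_eq_integral_smul hmeas]
  have hint1 : ∀ x : ℝ, (gaussianPDFReal m 1 x).toNNReal • Real.exp (t * x ^ 2)
      = gaussianPDFReal m 1 x * Real.exp (t * x ^ 2) := by
    intro x
    rw [NNReal.smul_def, Real.coe_toNNReal _ (gaussianPDFReal_nonneg _ _ _), smul_eq_mul]
  simp only [hint1, hkey]
  rw [integral_const_mul]
  rw [integral_sub_right_eq_self (fun y => Real.exp (-((1 - 2 * t) / 2) * y ^ 2))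
    (m / (1 - 2 * t)), integral_gaussian]
  have hπ : Real.pi / ((1 - 2 * t) / 2) = 2 * Real.pi / (1 - 2 * t) := by
    field_simp
  rw [hπ, Real.sqrt_div (by positivity) _]
  have h2π : (0:ℝ) < Real.sqrt (2 * Real.pi) := Real.sqrt_pos.mpr (by positivity)
  field_simp

lemma mgf_sq_gaussian {Ω : Type*} [MeasurableSpace Ω] {μ : Measure Ω} {X : Ω → ℝ}
    (hXm : Measurable X) {c : ℝ} (hmap : μ.map X = gaussianReal c 1) (t : ℝ) (ht : t ≤ 0) :
    mgf (fun ω => X ω ^ 2) μ t =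
      Real.exp (t * c ^ 2 / (1 - 2 * t)) / Real.sqrt (1 - 2 * t) := by
  have hcont : Continuous fun x : ℝ => Real.exp (t * x ^ 2) := by fun_prop
  have : mgf (fun ω => X ω ^ 2) μ t = ∫ ω, Real.exp (t * X ω ^ 2) ∂μ := rfl
  rw [this, ← integral_map hXm.aemeasurable hcont.aestronglyMeasurable, hmap,
    integral_exp_neg_sq_gaussian c t ht]

/-- Left-tail concentration for the noncentral chi-squared distribution
`Z ∼ χ²(ρ, ν)`: for every `x ≥ 0`, `P(Z ≤ ρ + ν − 2√((ν+2ρ)x)) ≤ e^{−x}`, and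
consequently, for any threshold `θ ≤ ρ + ν`,
`P(Z ≤ θ) ≤ exp(−(ν+ρ−θ)²/(4(ν+2ρ)))`. -/
theorem stmt_3 {Ω : Type*} [MeasurableSpace Ω] (μ : Measure Ω) [IsProbabilityMeasure μ]
    (Z : Ω → ℝ) (ρ : ℝ) (ν : ℕ) (hν : 1 ≤ ν)
    (hZ : IsNoncentralChiSq μ Z ρ ν) :
    (∀ x : ℝ, 0 ≤ x →
      μ {ω | Z ω ≤ ρ + ν - 2 * Real.sqrt ((ν + 2 * ρ) * x)}
        ≤ ENNReal.ofReal (Real.exp (-x))) ∧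
    (∀ θ : ℝ, θ ≤ ρ + ν →
      μ {ω | Z ω ≤ θ}
        ≤ ENNReal.ofReal (Real.exp (-(ν + ρ - θ) ^ 2 / (4 * (ν + 2 * ρ))))) := by
  obtain ⟨X, m, hindep, hmap, hρ, hZdef⟩ := hZ
  have hρ0 : 0 ≤ ρ := hρ ▸ Finset.sum_nonneg fun i _ => sq_nonneg _
  have hb : (0:ℝ) < (ν : ℝ) + 2 * ρ := by
    have : (1:ℝ) ≤ (ν : ℝ) := by exact_mod_cast hν
    linarith
  -- extract a.e.-measurable representatives
  have hX : ∀ i, AEMeasurable (fun ω => X ω i) μ := by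
    intro i
    by_contra h
    have h1 := congrArg (fun ξ : Measure ℝ => ξ Set.univ) (hmap i)
    simp [Measure.map_of_not_aemeasurable h] at h1
  set X' : Fin ν → Ω → ℝ := fun i => (hX i).mk _ with hX'def
  have hX'meas : ∀ i, Measurable (X' i) := fun i => (hX i).measurable_mk
  have hX'ae : ∀ i, (fun ω => X ω i) =ᵐ[μ] X' i := fun i => (hX i).ae_eq_mk
  have hmap' : ∀ i, μ.map (X' i) = gaussianReal (m i) 1 := by
    intro i
    rw [← Measure.map_congr (hX'ae i), hmap i]
  have hindep' : iIndepFun X' μ :=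
    iIndepFun_ae_congr hindep hX'ae
  set Y : Fin ν → Ω → ℝ := fun i ω => X' i ω ^ 2 with hYdef
  have hYmeas : ∀ i, Measurable (Y i) := fun i => (hX'meas i).pow_const 2
  have hindepY : iIndepFun Y μ :=
    hindep'.comp (fun _ y => y ^ 2) (fun _ => measurable_id.pow_const 2)
  have hZae : (fun ω => Z ω) =ᵐ[μ] (∑ i, Y i) := by
    have hae : ∀ᵐ ω ∂μ, ∀ i, X ω i = X' i ω := ae_all_iff.mpr hX'ae
    filter_upwards [hae] with ω hω
    rw [hZdef ω]
    simp only [Finset.sum_apply, hYdef]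
    exact Finset.sum_congr rfl fun i _ => by rw [hω i]
  -- main estimate
  have part1 : ∀ x : ℝ, 0 ≤ x →
      μ {ω | Z ω ≤ ρ + ν - 2 * Real.sqrt (((ν : ℝ) + 2 * ρ) * x)}
        ≤ ENNReal.ofReal (Real.exp (-x)) := by
    intro x hx
    set b : ℝ := (ν : ℝ) + 2 * ρ with hbdef
    set L : ℝ := Real.sqrt (x / b) with hLdef
    have hL0 : 0 ≤ L := Real.sqrt_nonneg _
    have hL2 : L ^ 2 = x / b := Real.sq_sqrt (div_nonneg hx hb.le)
    have hLx : L * Real.sqrt (b * x) = x := by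
      rw [hLdef, ← Real.sqrt_mul (div_nonneg hx hb.le),
        show x / b * (b * x) = x ^ 2 by field_simp, Real.sqrt_sq hx]
    set ε : ℝ := ρ + ν - 2 * Real.sqrt (b * x) with hεdef
    -- measure congruence
    have hsetae : {ω | Z ω ≤ ε} =ᵐ[μ] {ω | (∑ i, Y i) ω ≤ ε} := by
      refine Filter.eventuallyEq_set.mpr (hZae.mono fun ω hω => ?_)
      simp only [Set.mem_setOf_eq, hω]
    rw [show {ω | Z ω ≤ ρ + ν - 2 * Real.sqrt (((ν : ℝ) + 2 * ρ) * x)} = {ω | Z ω ≤ ε} from rfl,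
      measure_congr hsetae]
    -- Chernoff
    have hSnonneg : ∀ ω, 0 ≤ (∑ i, Y i) ω := by
      intro ω
      simp only [Finset.sum_apply]
      exact Finset.sum_nonneg fun i _ => sq_nonneg _
    have hSmeas : Measurable (∑ i, Y i) := by
      rw [show (∑ i, Y i) = (fun ω => ∑ i, Y i ω) from by ext ω; simp [Finset.sum_apply]]
      exact Finset.measurable_sum _ fun i _ => hYmeas i
    have hint : Integrable (fun ω => Real.exp (-L * (∑ i, Y i) ω)) μ := by
      refine (integrable_const (1:ℝ)).mono' ((hSmeas.const_mul _).exp).aestronglyMeasurable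
        (ae_of_all _ fun ω => ?_)
      rw [Real.norm_eq_abs, abs_of_pos (Real.exp_pos _)]
      exact Real.exp_le_one_iff.mpr (mul_nonpos_of_nonpos_of_nonneg (by linarith) (hSnonneg ω))
    have hch := measure_le_le_exp_mul_mgf (μ := μ) (X := ∑ i, Y i) ε
      (t := -L) (by linarith) hint
    -- compute the mgf
    have hmgf : mgf (∑ i, Y i) μ (-L) =
        Real.exp (-L * ρ / (1 + 2 * L)) / (Real.sqrt (1 + 2 * L)) ^ ν := by
      rw [iIndepFun.mgf_sum hindepY hYmeas]
      have heach : ∀ i : Fin ν, mgf (Y i) μ (-L) =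
          Real.exp (-L * m i ^ 2 / (1 + 2 * L)) / Real.sqrt (1 + 2 * L) := by
        intro i
        have := mgf_sq_gaussian (hX'meas i) (hmap' i) (-L) (by linarith)
        rw [show (1 : ℝ) - 2 * (-L) = 1 + 2 * L by ring] at this
        exact this
      simp only [heach]
      rw [Finset.prod_div_distrib, Finset.prod_const, ← Real.exp_sum,
        Finset.card_univ, Fintype.card_fin]
      congr 2
      rw [hρ, Finset.mul_sum, Finset.sum_div]
    rw [hmgf] at hch
    -- real-number estimate
    have hsq : Real.exp (L - L ^ 2) ≤ Real.sqrt (1 + 2 * L) := by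
      have h1 : Real.exp (2 * L - (2 * L) ^ 2 / 2) ≤ 1 + 2 * L := exp_quad_le (by linarith)
      calc Real.exp (L - L ^ 2)
          = Real.sqrt (Real.exp (2 * L - (2 * L) ^ 2 / 2)) := by
            rw [show 2 * L - (2 * L) ^ 2 / 2 = (L - L ^ 2) + (L - L ^ 2) by ring,
              Real.exp_add, Real.sqrt_mul_self (Real.exp_pos _).le]
        _ ≤ Real.sqrt (1 + 2 * L) := Real.sqrt_le_sqrt h1
    have hpow : Real.exp ((ν : ℝ) * (L - L ^ 2)) ≤ (Real.sqrt (1 + 2 * L)) ^ ν := by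
      rw [Real.exp_nat_mul]
      exact pow_le_pow_left₀ (Real.exp_pos _).le hsq ν
    have hfinal : Real.exp (-(-L) * ε) *
        (Real.exp (-L * ρ / (1 + 2 * L)) / (Real.sqrt (1 + 2 * L)) ^ ν) ≤ Real.exp (-x) := by
      have hstep : Real.exp (-(-L) * ε) *
          (Real.exp (-L * ρ / (1 + 2 * L)) / (Real.sqrt (1 + 2 * L)) ^ ν) ≤
          Real.exp (-(-L) * ε) *
          (Real.exp (-L * ρ / (1 + 2 * L)) / Real.exp ((ν : ℝ) * (L - L ^ 2))) := by
        gcongr <;> first | positivity | exact hpow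
      refine hstep.trans ?_
      rw [← Real.exp_sub, ← Real.exp_add, Real.exp_le_exp]
      -- arithmetic
      have h1L : (0:ℝ) < 1 + 2 * L := by linarith
      have h2 : -L * ρ / (1 + 2 * L) ≤ -(L * ρ) + 2 * L ^ 2 * ρ := by
        rw [div_le_iff₀ h1L]
        nlinarith [mul_nonneg (mul_nonneg (mul_nonneg hL0 hL0) hL0) hρ0]
      have h3 : -(-L) * ε = L * ρ + L * ν - 2 * x := by
        rw [hεdef, show -(-L) * (ρ + ↑ν - 2 * Real.sqrt (b * x))
            = L * ρ + L * ↑ν - 2 * (L * Real.sqrt (b * x)) by ring, hLx]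
      have h4 : (ν : ℝ) * L ^ 2 + 2 * L ^ 2 * ρ = x := by
        have : ((ν : ℝ) + 2 * ρ) * L ^ 2 = x := by
          rw [hL2, hbdef]
          field_simp
        linarith [this]
      rw [h3]
      nlinarith [h2]
    -- conclude
    have hfin2 : (μ {ω | (∑ i, Y i) ω ≤ ε}).toReal ≤ Real.exp (-x) := hch.trans hfinal
    calc μ {ω | (∑ i, Y i) ω ≤ ε}
        = ENNReal.ofReal ((μ {ω | (∑ i, Y i) ω ≤ ε}).toReal) :=
          (ENNReal.ofReal_toReal (measure_ne_top μ _)).symm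
      _ ≤ ENNReal.ofReal (Real.exp (-x)) := ENNReal.ofReal_le_ofReal hfin2
  refine ⟨part1, ?_⟩
  intro θ hθ
  set x : ℝ := (↑ν + ρ - θ) ^ 2 / (4 * ((ν : ℝ) + 2 * ρ)) with hxdef
  have hx0 : 0 ≤ x := by positivity
  have hθ' : 0 ≤ (ν : ℝ) + ρ - θ := by linarith
  have hkey : ρ + ν - 2 * Real.sqrt (((ν : ℝ) + 2 * ρ) * x) = θ := by
    have : ((ν : ℝ) + 2 * ρ) * x = ((↑ν + ρ - θ) / 2) ^ 2 := by
      rw [hxdef]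
      field_simp
      ring
    rw [this, Real.sqrt_sq (by linarith)]
    ring
  have := part1 x hx0
  rw [hkey] at this
  refine this.trans (le_of_eq ?_)
  congr 1
  rw [hxdef]
  ring
end

section
/- Let η ∼ χ²(ν−1) and ζ ∼ χ²(1) be independent, with ν ≥ 2, and let θ_G ≥ θ_V > 0. Then P(η + ζ ≥ θ_G, ζ ≥ θ_V) ≤ C(ν)·e^{−θ_G/2}·θ_G^{ν/2}·(1 − G_β(θ_V/θ_G; 1/2, (ν+1)/2)) + (1 − F₁(θ_G − ν + 1)), where C(ν) = e^{(ν−1)/2} / (√2 (ν−1)^{(ν−1)/2}) · Γ(ν/2 + 1/2)/Γ(ν/2 + 1), G_β(·;a,b) is the CDF of the Beta(a,b) distribution, and F₁ is the CDF of χ²(1). -/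
open MeasureTheory ProbabilityTheory

/-- The CDF of the chi-squared distribution with one degree of freedom. -/
noncomputable def chiSqOneCDF (t : ℝ) : ℝ :=
  (gammaMeasure ((1 : ℝ) / 2) ((1 : ℝ) / 2) (Set.Iic t)).toReal

/-- The CDF of the Beta(a,b) distribution evaluated at `x`. -/
noncomputable def betaCDF (a b x : ℝ) : ℝ :=
  (Real.Gamma (a + b) / (Real.Gamma a * Real.Gamma b)) *
    ∫ t in (0 : ℝ)..x, t ^ (a - 1) * (1 - t) ^ (b - 1)

/-- The constant `C(ν)` of Proposition 2. -/
noncomputable def Cconst (ν : ℕ) : ℝ :=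
  Real.exp (((ν : ℝ) - 1) / 2) / (Real.sqrt 2 * ((ν : ℝ) - 1) ^ (((ν : ℝ) - 1) / 2)) *
    (Real.Gamma ((ν : ℝ) / 2 + 1 / 2) / Real.Gamma ((ν : ℝ) / 2 + 1))

section Aux

open Set intervalIntegral
open scoped ENNReal NNReal

lemma betaIntegrand_intervalIntegrable {a b : ℝ} (ha : 0 < a) (hb : 1 ≤ b) :
    IntervalIntegrable (fun t : ℝ => t ^ (a - 1) * (1 - t) ^ (b - 1)) volume 0 1 := by
  refine IntervalIntegrable.mono_fun (intervalIntegrable_rpow' (by linarith : (-1:ℝ) < a - 1)) ?_ ?_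
  · exact ((measurable_id.pow_const _).mul
      ((measurable_const.sub measurable_id).pow_const _)).aestronglyMeasurable
  · rw [Set.uIoc_of_le (by norm_num : (0:ℝ) ≤ 1)]
    filter_upwards [ae_restrict_mem measurableSet_Ioc] with t ht
    have ht0 : 0 < t := ht.1
    have ht1 : t ≤ 1 := ht.2
    simp only [Real.norm_eq_abs]
    rw [abs_of_nonneg (mul_nonneg (Real.rpow_nonneg ht0.le _) (Real.rpow_nonneg (by linarith) _)),
      abs_of_nonneg (Real.rpow_nonneg ht0.le _)]
    have h1 : (1 - t) ^ (b - 1) ≤ 1 :=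
      Real.rpow_le_one (by linarith) (by linarith) (by linarith)
    nlinarith [Real.rpow_nonneg ht0.le (a-1), Real.rpow_nonneg (by linarith : (0:ℝ) ≤ 1 - t) (b-1),
      Real.rpow_pos_of_pos ht0 (a-1)]

lemma betaIntegral_real {a b : ℝ} (ha : 0 < a) (hb : 0 < b) :
    ∫ t in (0:ℝ)..1, t ^ (a - 1) * (1 - t) ^ (b - 1)
      = Real.Gamma a * Real.Gamma b / Real.Gamma (a + b) := by
  have hG : Real.Gamma (a + b) ≠ 0 := (Real.Gamma_pos_of_pos (by linarith)).ne'
  have key : Complex.betaIntegral a b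
      = ((∫ t in (0:ℝ)..1, t ^ (a - 1) * (1 - t) ^ (b - 1) : ℝ) : ℂ) := by
    rw [Complex.betaIntegral]
    rw [← intervalIntegral.integral_ofReal]
    refine intervalIntegral.integral_congr fun x hx => ?_
    rw [Set.uIcc_of_le (by norm_num : (0:ℝ) ≤ 1)] at hx
    have hx0 : (0:ℝ) ≤ x := hx.1
    have hx1 : x ≤ 1 := hx.2
    rw [show ((a:ℂ) - 1) = ((a - 1 : ℝ) : ℂ) by push_cast; ring,
      show ((b:ℂ) - 1) = ((b - 1 : ℝ) : ℂ) by push_cast; ring,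
      show ((1:ℂ) - (x:ℂ)) = ((1 - x : ℝ) : ℂ) by push_cast; ring,
      ← Complex.ofReal_cpow hx0, ← Complex.ofReal_cpow (by linarith)]
    norm_cast
  have h := Complex.Gamma_mul_Gamma_eq_betaIntegral
      (s := (a:ℂ)) (t := (b:ℂ)) (by simpa using ha) (by simpa using hb)
  rw [key] at h
  rw [Complex.Gamma_ofReal, Complex.Gamma_ofReal] at h
  have : ((a:ℂ) + b) = ((a + b : ℝ) : ℂ) := by push_cast; ring
  rw [this, Complex.Gamma_ofReal] at h
  have h' : Real.Gamma a * Real.Gamma b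
      = Real.Gamma (a + b) * ∫ t in (0:ℝ)..1, t ^ (a - 1) * (1 - t) ^ (b - 1) := by
    exact_mod_cast h
  field_simp
  linarith [h']

lemma betaIntegrand_intervalIntegrable' {a b u v : ℝ} (ha : 0 < a) (hb : 1 ≤ b)
    (hu0 : 0 ≤ u) (hv1 : v ≤ 1) (huv : u ≤ v) :
    IntervalIntegrable (fun t : ℝ => t ^ (a - 1) * (1 - t) ^ (b - 1)) volume u v :=
  (betaIntegrand_intervalIntegrable ha hb).mono_set
    (by rw [Set.uIcc_of_le huv, Set.uIcc_of_le (by norm_num : (0:ℝ) ≤ 1)];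
        exact Set.Icc_subset_Icc hu0 hv1)

lemma one_sub_betaCDF {a b x : ℝ} (ha : 0 < a) (hb : 1 ≤ b) (hx0 : 0 ≤ x) (hx1 : x ≤ 1) :
    1 - betaCDF a b x = (Real.Gamma (a + b) / (Real.Gamma a * Real.Gamma b)) *
      ∫ t in x..(1:ℝ), t ^ (a - 1) * (1 - t) ^ (b - 1) := by
  have hb0 : 0 < b := by linarith
  have hGa : 0 < Real.Gamma a := Real.Gamma_pos_of_pos ha
  have hGb : 0 < Real.Gamma b := Real.Gamma_pos_of_pos hb0
  have hGab : 0 < Real.Gamma (a + b) := Real.Gamma_pos_of_pos (by linarith)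
  have h1 : IntervalIntegrable (fun t : ℝ => t ^ (a - 1) * (1 - t) ^ (b - 1)) volume 0 x :=
    betaIntegrand_intervalIntegrable' ha hb le_rfl hx1 hx0
  have h2 : IntervalIntegrable (fun t : ℝ => t ^ (a - 1) * (1 - t) ^ (b - 1)) volume x 1 :=
    betaIntegrand_intervalIntegrable' ha hb hx0 le_rfl hx1
  have hadd := integral_add_adjacent_intervals h1 h2
  rw [betaIntegral_real ha hb0] at hadd
  rw [betaCDF]
  set c := Real.Gamma (a + b) / (Real.Gamma a * Real.Gamma b) with hc
  have hcval : c * (Real.Gamma a * Real.Gamma b / Real.Gamma (a + b)) = 1 := by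
    rw [hc]; field_simp
  have : (∫ t in (0:ℝ)..x, t ^ (a - 1) * (1 - t) ^ (b - 1))
      = Real.Gamma a * Real.Gamma b / Real.Gamma (a + b)
        - ∫ t in x..(1:ℝ), t ^ (a - 1) * (1 - t) ^ (b - 1) := by linarith
  rw [this, mul_sub, hcval]
  ring

lemma betaTail_nonneg {a b x : ℝ} (hx0 : 0 ≤ x) (hx1 : x ≤ 1) :
    0 ≤ ∫ t in x..(1:ℝ), t ^ (a - 1) * (1 - t) ^ (b - 1) := by
  refine intervalIntegral.integral_nonneg hx1 fun t ht => ?_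
  exact mul_nonneg (Real.rpow_nonneg (le_trans hx0 ht.1) _)
    (Real.rpow_nonneg (by linarith [ht.2]) _)

lemma gammaMeasure_Ici_le {a s : ℝ} (ha : 0 < a) (hs : 2 * a ≤ s) :
    gammaMeasure a (1/2) (Set.Ici s)
      ≤ ENNReal.ofReal ((s / (2 * a)) ^ a * Real.exp a * Real.exp (-s / 2)) := by
  have hs0 : 0 < s := lt_of_lt_of_le (by linarith) hs
  set lam : ℝ := 1/2 - a/s with hlam
  have hr' : 0 < a / s := div_pos ha hs0
  have hlam0 : 0 ≤ lam := by
    have : a / s ≤ 1/2 := by rw [div_le_iff₀ hs0]; linarith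
    simp only [hlam]; linarith
  have step1 : gammaMeasure a (1/2) (Set.Ici s) = ∫⁻ x in Set.Ici s, gammaPDF a (1/2) x := by
    rw [gammaMeasure, withDensity_apply _ measurableSet_Ici]
  have hmeas : Measurable fun x => ENNReal.ofReal (Real.exp (lam * (x - s))) * gammaPDF a (1/2) x :=
    ((Real.measurable_exp.comp ((measurable_id.sub_const s).const_mul lam)).ennreal_ofReal).mul
      (measurable_gammaPDFReal a (1/2)).ennreal_ofReal
  have step2 : (∫⁻ x in Set.Ici s, gammaPDF a (1/2) x)
      ≤ ∫⁻ x, ENNReal.ofReal (Real.exp (lam * (x - s))) * gammaPDF a (1/2) x := by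
    refine le_trans (setLIntegral_mono hmeas fun x hx => ?_) (setLIntegral_le_lintegral _ _)
    have h1 : (1:ℝ) ≤ Real.exp (lam * (x - s)) := by
      rw [← Real.exp_zero]
      exact Real.exp_le_exp.mpr (mul_nonneg hlam0 (by simpa using sub_nonneg.mpr (show s ≤ x from hx)))
    have h2 : (1:ℝ≥0∞) ≤ ENNReal.ofReal (Real.exp (lam * (x - s))) := by
      rw [← ENNReal.ofReal_one]; exact ENNReal.ofReal_le_ofReal h1
    exact le_mul_of_one_le_left (by simp) h2
  set c : ℝ := Real.exp (-lam * s) * ((1/2:ℝ) ^ a / (a/s) ^ a) with hc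
  have step3 : ∀ x : ℝ, ENNReal.ofReal (Real.exp (lam * (x - s))) * gammaPDF a (1/2) x
      = ENNReal.ofReal c * gammaPDF a (a/s) x := by
    intro x
    rcases lt_or_ge x 0 with hx | hx
    · rw [gammaPDF_of_neg hx, gammaPDF_of_neg hx, mul_zero, mul_zero]
    · rw [gammaPDF_of_nonneg hx, gammaPDF_of_nonneg hx,
        ← ENNReal.ofReal_mul (Real.exp_nonneg _), ← ENNReal.ofReal_mul]
      · congr 1
        have hne : ((a/s) ^ a : ℝ) ≠ 0 := (Real.rpow_pos_of_pos hr' a).ne'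
        have hGa : Real.Gamma a ≠ 0 := (Real.Gamma_pos_of_pos ha).ne'
        have hexp : Real.exp (lam * (x - s)) * Real.exp (-(1/2 * x))
            = Real.exp (-lam * s) * Real.exp (-(a/s * x)) := by
          rw [← Real.exp_add, ← Real.exp_add]
          congr 1
          simp only [hlam]
          field_simp
          ring
        have hco : (1/2:ℝ) ^ a / (a/s) ^ a * ((a/s) ^ a / Real.Gamma a)
            = (1/2:ℝ) ^ a / Real.Gamma a := by field_simp
        linear_combination (x ^ (a-1) * ((1/2:ℝ) ^ a / Real.Gamma a)) * hexp
          - (Real.exp (-lam*s) * Real.exp (-(a/s*x)) * x ^ (a-1)) * hco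
      · positivity
  have step4 : (∫⁻ x, ENNReal.ofReal (Real.exp (lam * (x - s))) * gammaPDF a (1/2) x)
      = ENNReal.ofReal c := by
    have hmg : Measurable (gammaPDF a (a/s)) := (measurable_gammaPDFReal _ _).ennreal_ofReal
    simp_rw [step3]
    rw [lintegral_const_mul _ hmg, lintegral_gammaPDF_eq_one ha hr', mul_one]
  have hcval : c = (s / (2 * a)) ^ a * Real.exp a * Real.exp (-s / 2) := by
    have h1 : -lam * s = a - s/2 := by simp only [hlam]; field_simp; ring
    have h2 : ((1/2:ℝ) ^ a / (a/s) ^ a) = (s / (2*a)) ^ a := by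
      rw [← Real.div_rpow (by norm_num) hr'.le]
      congr 1
      field_simp
    rw [hc, h1, h2, Real.exp_sub]
    rw [show -s/2 = -(s/2) by ring, Real.exp_neg]
    field_simp
  rw [step1, ← hcval]
  exact step2.trans (le_of_eq step4)

end Aux

set_option maxHeartbeats 2000000 in
/-- Proposition 2: for independent `η ∼ χ²(ν−1)` and `ζ ∼ χ²(1)` and `θ_G ≥ θ_V > 0`,
`P(η + ζ ≥ θ_G, ζ ≥ θ_V) ≤ C(ν)·e^{−θ_G/2}·θ_G^{ν/2}·(1 − G_β(θ_V/θ_G; 1/2, (ν+1)/2))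
 + (1 − F₁(θ_G − ν + 1))`. -/
theorem stmt_6 {Ω : Type*} [MeasurableSpace Ω] (μ : Measure Ω) [IsProbabilityMeasure μ]
    (ν : ℕ) (hν : 2 ≤ ν) (η ζ : Ω → ℝ) (hη : Measurable η) (hζ : Measurable ζ)
    (hηdist : μ.map η = gammaMeasure (((ν : ℝ) - 1) / 2) (1 / 2))
    (hζdist : μ.map ζ = gammaMeasure ((1 : ℝ) / 2) (1 / 2))
    (hindep : IndepFun η ζ μ)
    (θG θV : ℝ) (hθV : 0 < θV) (hθ : θV ≤ θG) :
    μ {ω | θG ≤ η ω + ζ ω ∧ θV ≤ ζ ω}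
      ≤ ENNReal.ofReal
          (Cconst ν * Real.exp (-θG / 2) * θG ^ ((ν : ℝ) / 2) *
              (1 - betaCDF (1 / 2) (((ν : ℝ) + 1) / 2) (θV / θG))
            + (1 - chiSqOneCDF (θG - ν + 1))) := by
  have hν2 : (2:ℝ) ≤ (ν:ℝ) := by exact_mod_cast hν
  have hθG : 0 < θG := lt_of_lt_of_le hθV hθ
  set k : ℝ := ((ν:ℝ) - 1)/2 with hk
  have hk0 : 0 < k := by rw [hk]; linarith
  set T : ℝ := θG - (ν:ℝ) + 1 with hTdef
  haveI hG1 : IsProbabilityMeasure (gammaMeasure ((1:ℝ)/2) ((1:ℝ)/2)) :=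
    isProbabilityMeasure_gammaMeasure (by norm_num) (by norm_num)
  have hx0 : 0 < θV / θG := div_pos hθV hθG
  have hx1 : θV / θG ≤ 1 := (div_le_one hθG).mpr hθ
  have hGhalf : 0 < Real.Gamma ((1:ℝ)/2) := Real.Gamma_pos_of_pos (by norm_num)
  have hGb : 0 < Real.Gamma (((ν:ℝ)+1)/2) := Real.Gamma_pos_of_pos (by linarith)
  have hGc : 0 < Real.Gamma ((ν:ℝ)/2 + 1) := Real.Gamma_pos_of_pos (by linarith)
  have hbsplit := one_sub_betaCDF (a := (1:ℝ)/2) (b := ((ν:ℝ)+1)/2) (x := θV/θG)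
      (by norm_num) (by linarith) hx0.le hx1
  have hCν : 0 ≤ Cconst ν := by
    simp only [Cconst]
    have h3 : (0:ℝ) ≤ ((ν:ℝ) - 1) ^ (((ν:ℝ)-1)/2) := Real.rpow_nonneg (by linarith) _
    have hGnn : 0 < Real.Gamma ((ν:ℝ)/2 + 1/2) := Real.Gamma_pos_of_pos (by linarith)
    apply mul_nonneg
    · exact div_nonneg (Real.exp_nonneg _) (mul_nonneg (Real.sqrt_nonneg _) h3)
    · exact div_nonneg hGnn.le hGc.le
  have hfirst : 0 ≤ Cconst ν * Real.exp (-θG / 2) * θG ^ ((ν : ℝ) / 2) *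
      (1 - betaCDF (1/2) (((ν:ℝ)+1)/2) (θV/θG)) := by
    rw [hbsplit]
    apply mul_nonneg (mul_nonneg (mul_nonneg hCν (Real.exp_nonneg _)) (Real.rpow_nonneg hθG.le _))
    exact mul_nonneg (div_nonneg (Real.Gamma_pos_of_pos (by linarith : (0:ℝ) < (1:ℝ)/2 + ((ν:ℝ)+1)/2)).le
        (mul_nonneg hGhalf.le hGb.le)) (betaTail_nonneg hx0.le hx1)
  have hsec : 0 ≤ 1 - chiSqOneCDF T := by
    simp only [chiSqOneCDF]
    have h := prob_le_one (μ := gammaMeasure ((1:ℝ)/2) ((1:ℝ)/2)) (s := Set.Iic T)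
    have h2 := ENNReal.toReal_mono ENNReal.one_ne_top h
    simp only [ENNReal.toReal_one] at h2
    linarith
  have hA : μ {ω | T ≤ ζ ω} = ENNReal.ofReal (1 - chiSqOneCDF T) := by
    have hmζ : μ {ω | T ≤ ζ ω} = gammaMeasure ((1:ℝ)/2) ((1:ℝ)/2) (Set.Ici T) := by
      rw [show {ω | T ≤ ζ ω} = ζ ⁻¹' (Set.Ici T) from rfl,
        ← Measure.map_apply hζ measurableSet_Ici, hζdist]
    have hsing : gammaMeasure ((1:ℝ)/2) ((1:ℝ)/2) {T} = 0 := by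
      rw [gammaMeasure, withDensity_apply _ (measurableSet_singleton T),
        Measure.restrict_eq_zero.mpr (by simp), lintegral_zero_measure]
    have hio : gammaMeasure ((1:ℝ)/2) ((1:ℝ)/2) (Set.Iic T)
        = gammaMeasure ((1:ℝ)/2) ((1:ℝ)/2) (Set.Iio T) := by
      rw [← Set.Iio_union_right,
        measure_union (by simp) (measurableSet_singleton T), hsing, add_zero]
    have hci : gammaMeasure ((1:ℝ)/2) ((1:ℝ)/2) (Set.Ici T)
        = 1 - gammaMeasure ((1:ℝ)/2) ((1:ℝ)/2) (Set.Iio T) := by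
      rw [← Set.compl_Iio]
      exact prob_compl_eq_one_sub measurableSet_Iio
    rw [hmζ, hci, ← hio]
    simp only [chiSqOneCDF]
    rw [ENNReal.ofReal_sub _ ENNReal.toReal_nonneg, ENNReal.ofReal_one,
      ENNReal.ofReal_toReal (measure_ne_top _ _)]
  have hsubset : {ω | θG ≤ η ω + ζ ω ∧ θV ≤ ζ ω}
      ⊆ {ω | T ≤ ζ ω} ∪ {ω | θV ≤ ζ ω ∧ ζ ω ≤ T ∧ θG - ζ ω ≤ η ω} := by
    rintro ω ⟨h1, h2⟩
    by_cases hcω : T ≤ ζ ω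
    · exact Or.inl hcω
    · exact Or.inr ⟨h2, (not_le.mp hcω).le, by linarith⟩
  have hB : μ {ω | θV ≤ ζ ω ∧ ζ ω ≤ T ∧ θG - ζ ω ≤ η ω}
      ≤ ENNReal.ofReal (Cconst ν * Real.exp (-θG / 2) * θG ^ ((ν : ℝ) / 2) *
          (1 - betaCDF (1/2) (((ν:ℝ)+1)/2) (θV/θG))) := by
    rcases lt_or_ge T θV with hc | hc
    · have hempty : {ω | θV ≤ ζ ω ∧ ζ ω ≤ T ∧ θG - ζ ω ≤ η ω} = ∅ := by
        ext ω
        simp only [Set.mem_setOf_eq, Set.mem_empty_iff_false, iff_false]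
        rintro ⟨h1, h2, -⟩
        exact absurd (h1.trans h2) (not_le.mpr hc)
      rw [hempty, measure_empty]
      simp
    · haveI hGk : IsProbabilityMeasure (gammaMeasure k (1/2)) :=
        isProbabilityMeasure_gammaMeasure hk0 (by norm_num)
      have hT1 : T ≤ θG := by rw [hTdef]; linarith
      have hT0 : 0 < T := lt_of_lt_of_le hθV hc
      have hT'0 : 0 < T/θG := div_pos hT0 hθG
      have hT'1 : T/θG ≤ 1 := (div_le_one hθG).mpr hT1
      have hxT' : θV/θG ≤ T/θG := by gcongr
      have hmap : μ.map (fun ω => (η ω, ζ ω))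
          = (gammaMeasure k (1/2)).prod (gammaMeasure ((1:ℝ)/2) (1/2)) := by
        rw [← hηdist, ← hζdist]
        exact (ProbabilityTheory.indepFun_iff_map_prod_eq_prod_map_map
          hη.aemeasurable hζ.aemeasurable).mp hindep
      set s : Set (ℝ × ℝ) := {p | θV ≤ p.2 ∧ p.2 ≤ T ∧ θG - p.2 ≤ p.1} with hsdef
      have hsm : MeasurableSet s :=
        (measurableSet_le measurable_const measurable_snd).inter
          ((measurableSet_le measurable_snd measurable_const).inter
            (measurableSet_le (measurable_const.sub measurable_snd) measurable_fst))
      have hμs : μ {ω | θV ≤ ζ ω ∧ ζ ω ≤ T ∧ θG - ζ ω ≤ η ω}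
          = ((gammaMeasure k (1/2)).prod (gammaMeasure ((1:ℝ)/2) (1/2))) s := by
        rw [← hmap, Measure.map_apply (hη.prodMk hζ) hsm]
        rfl
      rw [hμs, Measure.prod_apply_symm hsm]
      have hslice : ∀ z : ℝ, gammaMeasure k (1/2) ((fun x => (x, z)) ⁻¹' s)
          = Set.indicator (Set.Icc θV T)
              (fun z => gammaMeasure k (1/2) (Set.Ici (θG - z))) z := by
        intro z
        by_cases hz : z ∈ Set.Icc θV T
        · rw [Set.indicator_of_mem hz]
          congr 1
          ext x
          simp only [Set.mem_preimage, hsdef, Set.mem_setOf_eq, Set.mem_Ici]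
          rw [Set.mem_Icc] at hz
          exact ⟨fun h => h.2.2, fun h => ⟨hz.1, hz.2, h⟩⟩
        · rw [Set.indicator_of_notMem hz]
          rw [Set.mem_Icc] at hz
          have hpre : ((fun x => (x, z)) ⁻¹' s) = ∅ := by
            ext x
            simp only [Set.mem_preimage, hsdef, Set.mem_setOf_eq, Set.mem_empty_iff_false,
              iff_false]
            rintro ⟨h1, h2, -⟩
            exact hz ⟨h1, h2⟩
          rw [hpre, measure_empty]
      set g : ℝ → ℝ := fun z => ((θG - z) / (2*k)) ^ k * Real.exp k * Real.exp (-(θG - z) / 2)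
        with hgdef
      set CD : ℝ := Real.exp k * ((2*k) ^ k)⁻¹ * ((1/2:ℝ) ^ ((1:ℝ)/2) / Real.Gamma (1/2))
          * Real.exp (-θG/2) with hCDdef
      set F : ℝ → ℝ := fun z => CD * ((θG - z) ^ k * z ^ ((1:ℝ)/2 - 1)) with hFdef
      have hCD0 : 0 ≤ CD := by
        rw [hCDdef]
        have h4 : (0:ℝ) ≤ ((2*k) ^ k)⁻¹ := inv_nonneg.mpr (Real.rpow_nonneg (by linarith) _)
        exact mul_nonneg (mul_nonneg (mul_nonneg (Real.exp_nonneg _) h4)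
          (div_nonneg (Real.rpow_nonneg (by norm_num) _) hGhalf.le)) (Real.exp_nonneg _)
      have hgm : Measurable fun z => ENNReal.ofReal (g z) := by
        apply Measurable.ennreal_ofReal
        rw [hgdef]
        exact ((((measurable_const.sub measurable_id).div_const _).pow_const _).mul_const _).mul
          (Real.measurable_exp.comp ((measurable_const.sub measurable_id).neg.div_const _))
      have hFcont : ContinuousOn F (Set.Icc θV T) := by
        rw [hFdef]
        apply ContinuousOn.mul continuousOn_const
        apply ContinuousOn.mul
        · exact ContinuousOn.rpow_const ((continuous_const.sub continuous_id).continuousOn)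
            (fun z hz => Or.inr hk0.le)
        · exact ContinuousOn.rpow_const continuousOn_id
            (fun z hz => Or.inl (ne_of_gt (lt_of_lt_of_le hθV hz.1)))
      have hFint : IntegrableOn F (Set.Icc θV T) volume :=
        hFcont.integrableOn_compact isCompact_Icc
      have hFnn : 0 ≤ᵐ[volume.restrict (Set.Icc θV T)] F := by
        filter_upwards [ae_restrict_mem measurableSet_Icc] with z hz
        have hz0 : 0 ≤ z := (lt_of_lt_of_le hθV hz.1).le
        have hz1 : 0 ≤ θG - z := by
          have := hz.2; linarith
        simp only [hFdef]
        exact mul_nonneg hCD0 (mul_nonneg (Real.rpow_nonneg hz1 _) (Real.rpow_nonneg hz0 _))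
      -- interval integrability facts
      have hint1 : IntervalIntegrable (fun u : ℝ => u ^ ((1:ℝ)/2 - 1)
          * (1 - u) ^ (((ν:ℝ)+1)/2 - 1)) volume (θV/θG) (T/θG) :=
        betaIntegrand_intervalIntegrable' (by norm_num) (by linarith) hx0.le hT'1 hxT'
      have hint2 : IntervalIntegrable (fun u : ℝ => u ^ ((1:ℝ)/2 - 1)
          * (1 - u) ^ (((ν:ℝ)+1)/2 - 1)) volume (T/θG) 1 :=
        betaIntegrand_intervalIntegrable' (by norm_num) (by linarith) hT'0.le le_rfl hT'1
      have hJle : (∫ u in (θV/θG)..(T/θG), u ^ ((1:ℝ)/2 - 1) * (1 - u) ^ (((ν:ℝ)+1)/2 - 1))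
          ≤ ∫ u in (θV/θG)..(1:ℝ), u ^ ((1:ℝ)/2 - 1) * (1 - u) ^ (((ν:ℝ)+1)/2 - 1) := by
        have hadd := intervalIntegral.integral_add_adjacent_intervals hint1 hint2
        have hnn : 0 ≤ ∫ u in (T/θG)..(1:ℝ), u ^ ((1:ℝ)/2 - 1) * (1 - u) ^ (((ν:ℝ)+1)/2 - 1) :=
          intervalIntegral.integral_nonneg hT'1 (fun u hu =>
            mul_nonneg (Real.rpow_nonneg (le_trans hT'0.le hu.1) _)
              (Real.rpow_nonneg (by linarith [hu.2]) _))
        linarith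
      have hsub1 : ∫ z in Set.Icc θV T, F z
          = CD * ∫ z in θV..T, ((θG - z) ^ k * z ^ ((1:ℝ)/2 - 1)) := by
        rw [MeasureTheory.integral_Icc_eq_integral_Ioc, ← intervalIntegral.integral_of_le hc]
        simp only [hFdef]
        rw [intervalIntegral.integral_const_mul]
      have hsub2 : (∫ z in θV..T, ((θG - z) ^ k * z ^ ((1:ℝ)/2 - 1)))
          = θG ^ ((ν:ℝ)/2) * ∫ u in (θV/θG)..(T/θG),
              u ^ ((1:ℝ)/2 - 1) * (1 - u) ^ (((ν:ℝ)+1)/2 - 1) := by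
        have hcomp := intervalIntegral.integral_comp_mul_left
          (a := θV/θG) (b := T/θG) (f := fun z => (θG - z) ^ k * z ^ ((1:ℝ)/2 - 1)) hθG.ne'
        rw [show θG * (θV/θG) = θV by field_simp, show θG * (T/θG) = T by field_simp] at hcomp
        have hcongr : (∫ u in (θV/θG)..(T/θG), ((θG - θG*u) ^ k * (θG*u) ^ ((1:ℝ)/2 - 1)))
            = ∫ u in (θV/θG)..(T/θG), (θG ^ (k + ((1:ℝ)/2 - 1))
                * (u ^ ((1:ℝ)/2 - 1) * (1 - u) ^ (((ν:ℝ)+1)/2 - 1))) := by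
          refine intervalIntegral.integral_congr fun u hu => ?_
          rw [Set.uIcc_of_le hxT'] at hu
          have hu0 : 0 ≤ u := le_trans hx0.le hu.1
          have hu1 : u ≤ 1 := le_trans hu.2 hT'1
          rw [show θG - θG * u = θG * (1 - u) by ring,
            Real.mul_rpow hθG.le (by linarith), Real.mul_rpow hθG.le hu0,
            show (((ν:ℝ)+1)/2 - 1) = k by rw [hk]; ring,
            Real.rpow_add hθG]
          ring
        rw [hcongr, intervalIntegral.integral_const_mul, smul_eq_mul] at hcomp
        have hfin : (∫ z in θV..T, ((θG - z) ^ k * z ^ ((1:ℝ)/2 - 1)))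
            = θG * (θG ^ (k + ((1:ℝ)/2 - 1)) * ∫ u in (θV/θG)..(T/θG),
              u ^ ((1:ℝ)/2 - 1) * (1 - u) ^ (((ν:ℝ)+1)/2 - 1)) := by
          rw [hcomp]
          field_simp
        rw [hfin, ← mul_assoc, show θG * θG ^ (k + ((1:ℝ)/2 - 1))
            = θG ^ ((1:ℝ)) * θG ^ (k + ((1:ℝ)/2 - 1)) by rw [Real.rpow_one],
          ← Real.rpow_add hθG, show (1:ℝ) + (k + ((1:ℝ)/2 - 1)) = (ν:ℝ)/2 by rw [hk]; ring]
      have hcoef : CD = Cconst ν * Real.exp (-θG/2)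
          * (Real.Gamma ((1:ℝ)/2 + ((ν:ℝ)+1)/2)
              / (Real.Gamma (1/2) * Real.Gamma (((ν:ℝ)+1)/2))) := by
        rw [hCDdef]
        simp only [Cconst]
        rw [show (ν:ℝ)/2 + 1/2 = ((ν:ℝ)+1)/2 by ring,
          show (1:ℝ)/2 + ((ν:ℝ)+1)/2 = (ν:ℝ)/2 + 1 by ring,
          ← hk, show ((ν:ℝ) - 1) = 2*k by rw [hk]; ring,
          ← Real.sqrt_eq_rpow, show ((1:ℝ)/2) = ((2:ℝ))⁻¹ by norm_num, Real.sqrt_inv]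
        have hs2 : Real.sqrt 2 ≠ 0 := (Real.sqrt_pos.mpr (by norm_num)).ne'
        have h2k : ((2*k) ^ k : ℝ) ≠ 0 := (Real.rpow_pos_of_pos (by linarith) _).ne'
        field_simp
      have hreal : (∫ z in Set.Icc θV T, F z)
          ≤ Cconst ν * Real.exp (-θG / 2) * θG ^ ((ν:ℝ)/2)
            * (1 - betaCDF (1/2) (((ν:ℝ)+1)/2) (θV/θG)) := by
        rw [hsub1, hsub2, hbsplit]
        calc CD * (θG ^ ((ν:ℝ)/2) * ∫ u in (θV/θG)..(T/θG),
                u ^ ((1:ℝ)/2 - 1) * (1 - u) ^ (((ν:ℝ)+1)/2 - 1))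
            ≤ CD * (θG ^ ((ν:ℝ)/2) * ∫ u in (θV/θG)..(1:ℝ),
                u ^ ((1:ℝ)/2 - 1) * (1 - u) ^ (((ν:ℝ)+1)/2 - 1)) := by
              exact mul_le_mul_of_nonneg_left
                (mul_le_mul_of_nonneg_left hJle (Real.rpow_nonneg hθG.le _)) hCD0
          _ = _ := by rw [hcoef]; ring
      calc (∫⁻ z, gammaMeasure k (1/2) ((fun x => (x, z)) ⁻¹' s)
              ∂(gammaMeasure ((1:ℝ)/2) (1/2)))
          = ∫⁻ z in Set.Icc θV T, gammaMeasure k (1/2) (Set.Ici (θG - z))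
              ∂(gammaMeasure ((1:ℝ)/2) (1/2)) := by
            simp_rw [hslice]
            exact lintegral_indicator measurableSet_Icc _
        _ ≤ ∫⁻ z in Set.Icc θV T, ENNReal.ofReal (g z)
              ∂(gammaMeasure ((1:ℝ)/2) (1/2)) := by
            refine setLIntegral_mono hgm fun z hz => ?_
            have h2k : 2 * k ≤ θG - z := by
              have h2 : z ≤ T := hz.2
              rw [hTdef] at h2
              rw [hk]
              linarith
            have hch := gammaMeasure_Ici_le hk0 h2k
            rw [hgdef]
            exact hch
        _ = ∫⁻ z in Set.Icc θV T, gammaPDF (1/2) (1/2) z * ENNReal.ofReal (g z) ∂volume := by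
            rw [show gammaMeasure ((1:ℝ)/2) (1/2) = volume.withDensity (gammaPDF (1/2) (1/2))
              from rfl]
            exact setLIntegral_withDensity_eq_setLIntegral_mul volume
              (measurable_gammaPDFReal _ _).ennreal_ofReal hgm measurableSet_Icc
        _ = ∫⁻ z in Set.Icc θV T, ENNReal.ofReal (F z) ∂volume := by
            refine setLIntegral_congr_fun measurableSet_Icc (fun z hz => ?_)
            have hz0 : 0 < z := lt_of_lt_of_le hθV hz.1
            have hzT : z ≤ T := hz.2
            have hθGz : 0 ≤ θG - z := by linarith
            rw [gammaPDF_of_nonneg hz0.le]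
            have hpdfnn : (0:ℝ) ≤ (1/2:ℝ) ^ ((1:ℝ)/2 : ℝ) / Real.Gamma (1/2)
                * z ^ ((1:ℝ)/2 - 1) * Real.exp (-(1/2 * z)) := by
              exact mul_nonneg (mul_nonneg (div_nonneg (Real.rpow_nonneg (by norm_num) _)
                hGhalf.le) (Real.rpow_nonneg hz0.le _)) (Real.exp_nonneg _)
            rw [← ENNReal.ofReal_mul hpdfnn]
            congr 1
            simp only [hgdef, hFdef, hCDdef]
            have hdiv : ((θG - z)/(2*k)) ^ k = (θG - z) ^ k * ((2*k) ^ k)⁻¹ := by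
              rw [Real.div_rpow hθGz (by linarith), div_eq_mul_inv]
            have hexp : Real.exp (-(1/2 * z)) * Real.exp (-(θG - z) / 2)
                = Real.exp (-θG/2) := by
              rw [← Real.exp_add]; congr 1; ring
            rw [hdiv]
            linear_combination ((1/2:ℝ) ^ ((1:ℝ)/2 : ℝ) / Real.Gamma (1/2) * z ^ ((1:ℝ)/2 - 1)
              * ((θG - z) ^ k * ((2*k) ^ k)⁻¹) * Real.exp k) * hexp
        _ = ENNReal.ofReal (∫ z in Set.Icc θV T, F z) :=
            (ofReal_integral_eq_lintegral_ofReal hFint hFnn).symm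
        _ ≤ _ := ENNReal.ofReal_le_ofReal hreal
  calc μ {ω | θG ≤ η ω + ζ ω ∧ θV ≤ ζ ω}
      ≤ μ ({ω | T ≤ ζ ω} ∪ {ω | θV ≤ ζ ω ∧ ζ ω ≤ T ∧ θG - ζ ω ≤ η ω}) := measure_mono hsubset
    _ ≤ μ {ω | T ≤ ζ ω} + μ {ω | θV ≤ ζ ω ∧ ζ ω ≤ T ∧ θG - ζ ω ≤ η ω} := measure_union_le _ _
    _ ≤ ENNReal.ofReal (1 - chiSqOneCDF T)
        + ENNReal.ofReal (Cconst ν * Real.exp (-θG / 2) * θG ^ ((ν : ℝ) / 2) *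
            (1 - betaCDF (1/2) (((ν:ℝ)+1)/2) (θV/θG))) := add_le_add hA.le hB
    _ = _ := by
        rw [add_comm, ← ENNReal.ofReal_add hfirst hsec]
end

section
/- Let S be a finite group acting on a set U, μ the uniform probability measure on S, U a random variable in U, and ρ_v : U → ℝ a score such that the family (ρ_v(ξ'ξ•U))_{ξ'∈S} has a distribution independent of ξ ∈ S. Define T_v(u) = μ({ξ : ρ_v(u) ≤ ρ_v(ξ•u)}). Then for every θ ∈ [0,1], P(T_v(U) ≤ θ) ≤ θ. -/
open MeasureTheory
open scoped ENNReal

lemma det_count {S : Type*} [Fintype S] (a : S → ℝ) (c : ℝ) (hc : 0 ≤ c)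
    [DecidablePred fun ξ : S => (Nat.card {η : S // a ξ ≤ a η} : ℝ) ≤ c] :
    ((Finset.univ.filter fun ξ : S =>
      (Nat.card {η : S // a ξ ≤ a η} : ℝ) ≤ c).card : ℝ) ≤ c := by
  set K := Finset.univ.filter fun ξ : S =>
      (Nat.card {η : S // a ξ ≤ a η} : ℝ) ≤ c with hK
  rcases K.eq_empty_or_nonempty with h | h
  · simp [h, hc]
  · obtain ⟨ξ₀, hξ₀K, hmin⟩ := K.exists_min_image a h
    classical
    have hsub : K ⊆ Finset.univ.filter fun η => a ξ₀ ≤ a η := by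
      intro η hη
      simp only [Finset.mem_filter, Finset.mem_univ, true_and]
      exact hmin η hη
    have h1 : (K.card : ℝ) ≤ ((Finset.univ.filter fun η => a ξ₀ ≤ a η).card : ℝ) :=
      Nat.cast_le.mpr (Finset.card_le_card hsub)
    have h2 : ((Finset.univ.filter fun η => a ξ₀ ≤ a η).card : ℝ)
        = (Nat.card {η : S // a ξ₀ ≤ a η} : ℝ) := by
      rw [Nat.card_eq_fintype_card, Fintype.card_subtype]
    have h3 := (Finset.mem_filter.mp hξ₀K).2
    linarith

/-- Validity of randomization tests: `S` is a finite group acting on the data space,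
`μS`-averages are uniform over `S`, and the family `(ρ_v((ξ'ξ)•U))_{ξ'∈S}` has a
distribution independent of `ξ`. With
`T_v(u) = μS({ξ : ρ_v(u) ≤ ρ_v(ξ•u)})` (the proportion of group elements giving a score
at least the observed one), for every `θ ∈ [0,1]`, `P(T_v(U) ≤ θ) ≤ θ`. -/
theorem stmt_8 {Ω S 𝒰 : Type*} [MeasurableSpace Ω] (μ : Measure Ω) [IsProbabilityMeasure μ]
    [Group S] [Fintype S] [MulAction S 𝒰]
    (U : Ω → 𝒰) (ρv : 𝒰 → ℝ)
    (hmeas : ∀ ξ : S, Measurable (fun ω => ρv (ξ • U ω)))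
    (hinv : ∀ ξ : S,
      μ.map (fun ω => fun ξ' : S => ρv ((ξ' * ξ) • U ω))
        = μ.map (fun ω => fun ξ' : S => ρv (ξ' • U ω)))
    (Tv : 𝒰 → ℝ)
    (hTv : ∀ u, Tv u = (Nat.card {ξ : S // ρv u ≤ ρv (ξ • u)} : ℝ) / Fintype.card S)
    (θ : ℝ) (hθ : θ ∈ Set.Icc (0 : ℝ) 1) :
    (μ {ω | Tv (U ω) ≤ θ}).toReal ≤ θ := by
  classical
  obtain ⟨hθ0, hθ1⟩ := hθ
  have hnR : (0:ℝ) < (Fintype.card S : ℝ) := by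
    exact_mod_cast Fintype.card_pos
  -- the statistic as a function of the vector of scores
  set G : (S → ℝ) → ℝ :=
    fun f => (Nat.card {ξ' : S // f 1 ≤ f ξ'} : ℝ) / Fintype.card S with hGdef
  have hGmeas : Measurable G := by
    have hGeq : G = fun f => (∑ ξ' : S, if f 1 ≤ f ξ' then (1:ℝ) else 0) / Fintype.card S := by
      funext f
      show (Nat.card {ξ' : S // f 1 ≤ f ξ'} : ℝ) / Fintype.card S = _
      congr 1
      rw [Nat.card_eq_fintype_card, Fintype.card_subtype, Finset.card_filter]
      push_cast
      rfl
    rw [hGeq]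
    refine Measurable.div_const ?_ _
    exact Finset.measurable_sum _ fun ξ' _ =>
      Measurable.ite (measurableSet_le (measurable_pi_apply 1) (measurable_pi_apply ξ'))
        measurable_const measurable_const
  have hG : ∀ (ξ : S) (u : 𝒰), Tv (ξ • u) = G (fun ξ' => ρv ((ξ' * ξ) • u)) := by
    intro ξ u
    rw [hTv, hGdef]
    simp only [one_mul, mul_smul]
  set A : S → Set Ω := fun ξ => {ω | Tv (ξ • U ω) ≤ θ} with hAdef
  have hv : ∀ ξ : S, Measurable (fun ω => fun ξ' : S => ρv ((ξ' * ξ) • U ω)) :=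
    fun ξ => measurable_pi_lambda _ fun ξ' => hmeas (ξ' * ξ)
  have hBmeas : MeasurableSet (G ⁻¹' Set.Iic θ) := hGmeas measurableSet_Iic
  have hApre : ∀ ξ : S,
      A ξ = (fun ω => fun ξ' : S => ρv ((ξ' * ξ) • U ω)) ⁻¹' (G ⁻¹' Set.Iic θ) := by
    intro ξ
    ext ω
    simp only [hAdef, Set.mem_setOf_eq, Set.mem_preimage, Set.mem_Iic, hG ξ (U ω)]
  have hAmeas : ∀ ξ, MeasurableSet (A ξ) := fun ξ => by
    rw [hApre]; exact (hv ξ) hBmeas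
  have hAeq : ∀ ξ : S, μ (A ξ) = μ (A 1) := by
    intro ξ
    have h1 : μ (A ξ) = μ.map (fun ω => fun ξ' : S => ρv ((ξ' * ξ) • U ω)) (G ⁻¹' Set.Iic θ) := by
      rw [Measure.map_apply (hv ξ) hBmeas, hApre ξ]
    have h2 : μ (A 1) = μ.map (fun ω => fun ξ' : S => ρv ((ξ' * 1) • U ω)) (G ⁻¹' Set.Iic θ) := by
      rw [Measure.map_apply (hv 1) hBmeas, hApre 1]
    rw [h1, h2, hinv ξ, hinv 1]
  -- pointwise counting bound
  have hpoint : ∀ ω : Ω,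
      ((Finset.univ.filter fun ξ : S => ω ∈ A ξ).card : ℝ) ≤ θ * Fintype.card S := by
    intro ω
    have hiff : ∀ ξ : S, (ω ∈ A ξ) ↔
        ((Nat.card {η : S // ρv (ξ • U ω) ≤ ρv (η • U ω)} : ℝ) ≤ θ * Fintype.card S) := by
      intro ξ
      have hcard : Nat.card {ξ' : S // ρv (ξ • U ω) ≤ ρv (ξ' • ξ • U ω)}
          = Nat.card {η : S // ρv (ξ • U ω) ≤ ρv (η • U ω)} :=
        Nat.card_congr ((Equiv.mulRight ξ).subtypeEquiv (fun ξ' => by simp [mul_smul]))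
      show Tv (ξ • U ω) ≤ θ ↔ _
      rw [hTv, div_le_iff₀ hnR, hcard, mul_comm θ]
    have hfe : (Finset.univ.filter fun ξ : S => ω ∈ A ξ)
        = Finset.univ.filter fun ξ : S =>
          (Nat.card {η : S // ρv (ξ • U ω) ≤ ρv (η • U ω)} : ℝ) ≤ θ * Fintype.card S := by
      apply Finset.filter_congr
      intro ξ _
      exact hiff ξ
    rw [hfe]
    exact det_count (fun ξ => ρv (ξ • U ω)) _ (by positivity)
  -- integrate
  have hsum : ∑ ξ : S, μ (A ξ) ≤ ENNReal.ofReal (θ * Fintype.card S) := by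
    have h1 : ∀ ξ : S, μ (A ξ) = ∫⁻ ω, (A ξ).indicator (fun _ => (1:ℝ≥0∞)) ω ∂μ := by
      intro ξ
      rw [lintegral_indicator_const (hAmeas ξ), one_mul]
    calc ∑ ξ : S, μ (A ξ) = ∫⁻ ω, ∑ ξ : S, (A ξ).indicator (fun _ => (1:ℝ≥0∞)) ω ∂μ := by
          rw [lintegral_finset_sum _ fun ξ _ => measurable_const.indicator (hAmeas ξ)]
          simp_rw [← h1]
      _ ≤ ∫⁻ _, ENNReal.ofReal (θ * Fintype.card S) ∂μ := by
          refine lintegral_mono fun ω => ?_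
          have heq : ∑ ξ : S, (A ξ).indicator (fun _ => (1:ℝ≥0∞)) ω
              = ((Finset.univ.filter fun ξ : S => ω ∈ A ξ).card : ℝ≥0∞) := by
            rw [Finset.card_filter]
            push_cast
            simp [Set.indicator_apply]
          rw [heq, ← ENNReal.ofReal_natCast]
          exact ENNReal.ofReal_le_ofReal (hpoint ω)
      _ = ENNReal.ofReal (θ * Fintype.card S) := by
          simp
  have hmain : (Fintype.card S : ℝ≥0∞) * μ (A 1) ≤
      (Fintype.card S : ℝ≥0∞) * ENNReal.ofReal θ := by
    have hl : ∑ ξ : S, μ (A ξ) = (Fintype.card S : ℝ≥0∞) * μ (A 1) := by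
      simp [hAeq, Finset.sum_const, nsmul_eq_mul]
    have hr : ENNReal.ofReal (θ * Fintype.card S)
        = (Fintype.card S : ℝ≥0∞) * ENNReal.ofReal θ := by
      rw [ENNReal.ofReal_mul hθ0, ENNReal.ofReal_natCast, mul_comm]
    rw [← hl, ← hr]
    exact hsum
  have hμ : μ (A 1) ≤ ENNReal.ofReal θ := by
    have hne : (Fintype.card S : ℝ≥0∞) ≠ 0 := by
      simp [Fintype.card_ne_zero]
    exact (ENNReal.mul_le_mul_iff_right hne (ENNReal.natCast_ne_top _)).mp hmain
  have hset : {ω | Tv (U ω) ≤ θ} = A 1 := by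
    ext ω; simp [hAdef]
  rw [hset]
  calc (μ (A 1)).toReal ≤ (ENNReal.ofReal θ).toReal :=
        ENNReal.toReal_mono ENNReal.ofReal_ne_top hμ
    _ = θ := ENNReal.toReal_ofReal hθ0
end

section
/- Let S be a finite group acting on U, μ uniform on S, and ρ_g, ρ_v scores such that the joint distribution of (ρ_g((ξ'ξ)•U), ρ_v((ξ'ξ)•U))_{ξ'∈S} is independent of ξ ∈ S. Define T_g(u) = μ(ξ : ρ_g(u) ≤ ρ_g(ξ•u)), N_g^{θ_G}(u) = μ(ξ : T_g(ξ•u) ≤ θ_G), and T_v^{θ_G}(u) = μ(ξ : ρ_v(u) ≤ ρ_v(ξ•u) and T_g(ξ•u) ≤ θ_G) / N_g^{θ_G}(u). Then P(T_g(U) ≤ θ_G and T_v^{θ_G}(U) ≤ θ_V) ≤ θ_G · θ_V. -/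
open MeasureTheory

open MeasureTheory
set_option linter.unusedSectionVars false
open MeasureTheory Finset
section AuxPerm
variable {S : Type*} [Group S] [Fintype S]

noncomputable def cntG (w : S → ℝ × ℝ) (ξ : S) : ℕ :=
  Nat.card {ξ' : S // (w ξ).1 ≤ (w (ξ' * ξ)).1}

noncomputable def pG (w : S → ℝ × ℝ) (ξ : S) : ℝ := (cntG w ξ : ℝ) / Fintype.card S

noncomputable def cntN (θG : ℝ) (w : S → ℝ × ℝ) : ℕ := Nat.card {ξ : S // pG w ξ ≤ θG}

noncomputable def cntM (θG : ℝ) (w : S → ℝ × ℝ) : ℕ :=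
  Nat.card {ξ : S // (w 1).2 ≤ (w ξ).2 ∧ pG w ξ ≤ θG}

def shiftW (ξ : S) (w : S → ℝ × ℝ) : S → ℝ × ℝ := fun ξ' => w (ξ' * ξ)

noncomputable def inA (θG θV : ℝ) (w : S → ℝ × ℝ) : Prop :=
  pG w 1 ≤ θG ∧
    ((cntM θG w : ℝ) / Fintype.card S) / ((cntN θG w : ℝ) / Fintype.card S) ≤ θV

lemma natCard_mulRight (P : S → Prop) (ξ : S) :
    Nat.card {ζ : S // P (ζ * ξ)} = Nat.card {η : S // P η} :=
  Nat.card_congr (Equiv.subtypeEquiv (Equiv.mulRight ξ) (fun _ => Iff.rfl))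

lemma natCard_congr {P Q : S → Prop} (h : ∀ ξ, P ξ ↔ Q ξ) :
    Nat.card {ξ : S // P ξ} = Nat.card {ξ : S // Q ξ} :=
  Nat.card_congr (Equiv.subtypeEquivRight h)

lemma natCard_eq_filterCard (P : S → Prop) [DecidablePred P] :
    Nat.card {ξ : S // P ξ} = (Finset.univ.filter P).card := by
  simp [Nat.card_eq_fintype_card, Fintype.card_subtype]

lemma cntG_shift (w : S → ℝ × ℝ) (ξ ζ : S) : cntG (shiftW ξ w) ζ = cntG w (ζ * ξ) :=
  natCard_congr (fun ξ' => by simp [shiftW, mul_assoc])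

lemma pG_shift (w : S → ℝ × ℝ) (ξ ζ : S) : pG (shiftW ξ w) ζ = pG w (ζ * ξ) := by
  simp [pG, cntG_shift]

lemma cntG_eq (w : S → ℝ × ℝ) (ξ : S) :
    cntG w ξ = Nat.card {ζ : S // (w ξ).1 ≤ (w ζ).1} :=
  natCard_mulRight (fun ζ => (w ξ).1 ≤ (w ζ).1) ξ

lemma cntN_shift (θG : ℝ) (w : S → ℝ × ℝ) (ξ : S) : cntN θG (shiftW ξ w) = cntN θG w := by
  unfold cntN
  rw [natCard_congr (fun ζ => by rw [pG_shift] : ∀ ζ, pG (shiftW ξ w) ζ ≤ θG ↔ pG w (ζ * ξ) ≤ θG)]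
  exact natCard_mulRight (fun η => pG w η ≤ θG) ξ

lemma cntM_shift (θG : ℝ) (w : S → ℝ × ℝ) (ξ : S) :
    cntM θG (shiftW ξ w) = Nat.card {η : S // (w ξ).2 ≤ (w η).2 ∧ pG w η ≤ θG} := by
  unfold cntM
  rw [natCard_congr (fun ζ => by rw [pG_shift]; simp [shiftW] :
    ∀ ζ, (shiftW ξ w 1).2 ≤ (shiftW ξ w ζ).2 ∧ pG (shiftW ξ w) ζ ≤ θG
      ↔ (w ξ).2 ≤ (w (ζ * ξ)).2 ∧ pG w (ζ * ξ) ≤ θG)]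
  exact natCard_mulRight (fun η => (w ξ).2 ≤ (w η).2 ∧ pG w η ≤ θG) ξ

open Classical in
lemma count_rank_le {α : Type*} [Fintype α] (K : Finset α) (y : α → ℝ) (t : ℝ) (ht : 0 ≤ t) :
    ((K.filter fun ξ => ((K.filter fun η => y ξ ≤ y η).card : ℝ) ≤ t * K.card).card : ℝ)
      ≤ t * K.card := by
  set B := K.filter fun ξ => ((K.filter fun η => y ξ ≤ y η).card : ℝ) ≤ t * K.card with hB
  rcases B.eq_empty_or_nonempty with h | h
  · rw [h]; simp; positivity
  · obtain ⟨ξ0, hξ0, hmin⟩ := B.exists_min_image y h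
    have hsub : B ⊆ K.filter fun η => y ξ0 ≤ y η := fun η hη =>
      Finset.mem_filter.2 ⟨(Finset.mem_filter.1 hη).1, hmin η hη⟩
    have h1 : (B.card : ℝ) ≤ ((K.filter fun η => y ξ0 ≤ y η).card : ℝ) := by
      exact_mod_cast Finset.card_le_card hsub
    exact h1.trans (Finset.mem_filter.1 hξ0).2

end AuxPerm

section KeyDet
variable {S : Type*} [Group S] [Fintype S]

open Classical in
lemma key_det {θG θV : ℝ} (hθG0 : 0 ≤ θG) (hθV0 : 0 ≤ θV) (w : S → ℝ × ℝ) :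
    ((Nat.card {ξ : S // inA θG θV (shiftW ξ w)}) : ℝ) ≤ θG * θV * Fintype.card S := by
  set n := Fintype.card S with hn
  have hnpos : (0:ℝ) < n := by
    have := Fintype.card_pos (α := S); exact_mod_cast this
  set K := Finset.univ.filter (fun η : S => pG w η ≤ θG) with hKdef
  -- Step 1: K.card ≤ θG * n
  have hK : K = Finset.univ.filter fun ξ : S =>
      (((Finset.univ.filter fun η : S => (w ξ).1 ≤ (w η).1).card : ℝ)
        ≤ θG * (Finset.univ : Finset S).card) := by
    apply Finset.filter_congr
    intro ξ _
    rw [Finset.card_univ, ← hn, ← natCard_eq_filterCard, ← cntG_eq]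
    exact div_le_iff₀ hnpos
  have hk : (K.card : ℝ) ≤ θG * n := by
    rw [hK]
    simpa [Finset.card_univ] using count_rank_le Finset.univ (fun η : S => (w η).1) θG hθG0
  -- cntN = K.card
  have hcntN : cntN θG w = K.card := natCard_eq_filterCard _
  -- Step 2: the shifted-inA set is inside the second-level rank set
  have hsub : (Finset.univ.filter fun ξ : S => inA θG θV (shiftW ξ w))
      ⊆ K.filter fun ξ => ((K.filter fun η => (w ξ).2 ≤ (w η).2).card : ℝ) ≤ θV * K.card := by
    intro ξ hξ
    have hin : inA θG θV (shiftW ξ w) := (Finset.mem_filter.1 hξ).2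
    obtain ⟨h1, h2⟩ := hin
    have hξK : ξ ∈ K := by
      rw [hKdef, Finset.mem_filter]
      refine ⟨Finset.mem_univ _, ?_⟩
      have := pG_shift w ξ 1
      rw [one_mul] at this
      rwa [this] at h1
    have hkpos : (0:ℝ) < K.card := by
      have : 0 < K.card := Finset.card_pos.2 ⟨ξ, hξK⟩
      exact_mod_cast this
    -- identify cntM/cntN in h2
    have hM : cntM θG (shiftW ξ w) = (K.filter fun η => (w ξ).2 ≤ (w η).2).card := by
      rw [cntM_shift, hKdef, Finset.filter_filter, natCard_congr (fun η => and_comm)]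
      exact natCard_eq_filterCard _
    have hdd : ∀ (M k : ℕ), ((M:ℝ)/(Fintype.card S))/((k:ℝ)/(Fintype.card S)) = (M:ℝ)/k := by
      intro M k
      rw [div_div_div_cancel_right₀]
      exact ne_of_gt hnpos
    rw [hM, cntN_shift, hcntN, hdd, div_le_iff₀ hkpos] at h2
    exact Finset.mem_filter.2 ⟨hξK, by linarith⟩
  calc ((Nat.card {ξ : S // inA θG θV (shiftW ξ w)}) : ℝ)
      = ((Finset.univ.filter fun ξ : S => inA θG θV (shiftW ξ w)).card : ℝ) := by
        rw [natCard_eq_filterCard]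
    _ ≤ ((K.filter fun ξ => ((K.filter fun η => (w ξ).2 ≤ (w η).2).card : ℝ)
          ≤ θV * K.card).card : ℝ) := by exact_mod_cast Finset.card_le_card hsub
    _ ≤ θV * K.card := count_rank_le K (fun η : S => (w η).2) θV hθV0
    _ ≤ θV * (θG * n) := by nlinarith
    _ = θG * θV * n := by ring

end KeyDet

section Meas
variable {S : Type*} [Group S] [Fintype S]

lemma measurable_cntG (ξ : S) : Measurable fun w : S → ℝ × ℝ => (cntG w ξ : ℝ) := by
  classical
  have h : (fun w : S → ℝ × ℝ => (cntG w ξ : ℝ))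
      = fun w => ∑ ξ' : S, if (w ξ).1 ≤ (w (ξ' * ξ)).1 then (1:ℝ) else 0 := by
    funext w
    rw [cntG, natCard_eq_filterCard, Finset.card_filter]
    push_cast
    rfl
  rw [h]
  exact Finset.measurable_sum _ fun ξ' _ =>
    Measurable.ite (measurableSet_le ((measurable_pi_apply ξ).fst)
      ((measurable_pi_apply (ξ' * ξ)).fst)) measurable_const measurable_const

lemma measurable_pG (ξ : S) : Measurable fun w : S → ℝ × ℝ => pG w ξ :=
  (measurable_cntG ξ).div_const _

lemma measurable_cntN (θG : ℝ) : Measurable fun w : S → ℝ × ℝ => (cntN θG w : ℝ) := by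
  classical
  have h : (fun w : S → ℝ × ℝ => (cntN θG w : ℝ))
      = fun w => ∑ ξ : S, if pG w ξ ≤ θG then (1:ℝ) else 0 := by
    funext w
    rw [cntN, natCard_eq_filterCard, Finset.card_filter]
    push_cast
    rfl
  rw [h]
  exact Finset.measurable_sum _ fun ξ _ =>
    Measurable.ite (measurableSet_le (measurable_pG ξ) measurable_const)
      measurable_const measurable_const

lemma measurable_cntM (θG : ℝ) : Measurable fun w : S → ℝ × ℝ => (cntM θG w : ℝ) := by
  classical
  have h : (fun w : S → ℝ × ℝ => (cntM θG w : ℝ))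
      = fun w => ∑ ξ : S, if (w 1).2 ≤ (w ξ).2 ∧ pG w ξ ≤ θG then (1:ℝ) else 0 := by
    funext w
    rw [cntM, natCard_eq_filterCard, Finset.card_filter]
    push_cast
    rfl
  rw [h]
  refine Finset.measurable_sum _ fun ξ _ => Measurable.ite ?_ measurable_const measurable_const
  exact (measurableSet_le ((measurable_pi_apply 1).snd) ((measurable_pi_apply ξ).snd)).inter
    (measurableSet_le (measurable_pG ξ) measurable_const)

lemma measurableSet_inA (θG θV : ℝ) : MeasurableSet {w : S → ℝ × ℝ | inA θG θV w} := by
  have h1 : MeasurableSet {w : S → ℝ × ℝ | pG w 1 ≤ θG} :=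
    measurableSet_le (measurable_pG 1) measurable_const
  have h2 : MeasurableSet {w : S → ℝ × ℝ |
      ((cntM θG w : ℝ) / Fintype.card S) / ((cntN θG w : ℝ) / Fintype.card S) ≤ θV} :=
    measurableSet_le (Measurable.div ((measurable_cntM θG).div_const _)
      ((measurable_cntN θG).div_const _)) measurable_const
  exact h1.inter h2

end Meas
/-- Theorem 1 (doubly-null case) for the asymptotic two-level permutation test: under
the joint invariance assumption for the scores `(ρ_g, ρ_v)`, with
`T_g(u) = μS(ξ : ρ_g(u) ≤ ρ_g(ξ•u))`, `N_g^{θ_G}(u) = μS(ξ : T_g(ξ•u) ≤ θ_G)` and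
`T_v^{θ_G}(u) = μS(ξ : ρ_v(u) ≤ ρ_v(ξ•u), T_g(ξ•u) ≤ θ_G)/N_g^{θ_G}(u)`, one has
`P(T_g(U) ≤ θ_G, T_v^{θ_G}(U) ≤ θ_V) ≤ θ_G·θ_V`. -/
theorem stmt_9 {Ω S 𝒰 : Type*} [MeasurableSpace Ω] (μ : Measure Ω) [IsProbabilityMeasure μ]
    [Group S] [Fintype S] [MulAction S 𝒰]
    (U : Ω → 𝒰) (ρg ρv : 𝒰 → ℝ)
    (hmeasg : ∀ ξ : S, Measurable (fun ω => ρg (ξ • U ω)))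
    (hmeasv : ∀ ξ : S, Measurable (fun ω => ρv (ξ • U ω)))
    (hinv : ∀ ξ : S,
      μ.map (fun ω => fun ξ' : S => (ρg ((ξ' * ξ) • U ω), ρv ((ξ' * ξ) • U ω)))
        = μ.map (fun ω => fun ξ' : S => (ρg (ξ' • U ω), ρv (ξ' • U ω))))
    (θG θV : ℝ) (hθG : θG ∈ Set.Icc (0 : ℝ) 1) (hθV : θV ∈ Set.Icc (0 : ℝ) 1)
    (Tg Ng Tvc : 𝒰 → ℝ)
    (hTg : ∀ u, Tg u = (Nat.card {ξ : S // ρg u ≤ ρg (ξ • u)} : ℝ) / Fintype.card S)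
    (hNg : ∀ u, Ng u = (Nat.card {ξ : S // Tg (ξ • u) ≤ θG} : ℝ) / Fintype.card S)
    (hTvc : ∀ u, Tvc u
      = ((Nat.card {ξ : S // ρv u ≤ ρv (ξ • u) ∧ Tg (ξ • u) ≤ θG} : ℝ) / Fintype.card S)
          / Ng u) :
    (μ {ω | Tg (U ω) ≤ θG ∧ Tvc (U ω) ≤ θV}).toReal ≤ θG * θV := by
  classical
  obtain ⟨hθG0, _⟩ := hθG
  obtain ⟨hθV0, _⟩ := hθV
  have hnpos : (0:ℝ) < Fintype.card S := by exact_mod_cast Fintype.card_pos (α := S)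
  set w : Ω → S → ℝ × ℝ := fun ω ξ' => (ρg (ξ' • U ω), ρv (ξ' • U ω)) with hw
  have hwmeas : Measurable w :=
    measurable_pi_lambda _ fun ξ' => (hmeasg ξ').prod (hmeasv ξ')
  set A : Set (S → ℝ × ℝ) := {v | inA θG θV v} with hA
  have hAmeas : MeasurableSet A := measurableSet_inA θG θV
  -- identification of Tg with pG
  have hTg' : ∀ (ω : Ω) (ξ : S), Tg (ξ • U ω) = pG (w ω) ξ := by
    intro ω ξ
    rw [hTg, pG]
    congr 1
    have : Nat.card {ξ' : S // ρg (ξ • U ω) ≤ ρg (ξ' • ξ • U ω)} = cntG (w ω) ξ := by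
      unfold cntG
      exact natCard_congr fun ξ' => by rw [hw]; simp only []; rw [mul_smul]
    exact_mod_cast this
  have hTgU : ∀ ω : Ω, Tg (U ω) = pG (w ω) 1 := by
    intro ω
    have := hTg' ω 1
    rwa [one_smul] at this
  have hNg' : ∀ ω : Ω, Ng (U ω) = (cntN θG (w ω) : ℝ) / Fintype.card S := by
    intro ω
    rw [hNg]
    congr 1
    have : Nat.card {ξ : S // Tg (ξ • U ω) ≤ θG} = cntN θG (w ω) := by
      unfold cntN
      exact natCard_congr fun ξ => by rw [hTg']
    exact_mod_cast this
  have hTvc' : ∀ ω : Ω, Tvc (U ω)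
      = ((cntM θG (w ω) : ℝ) / Fintype.card S) / ((cntN θG (w ω) : ℝ) / Fintype.card S) := by
    intro ω
    rw [hTvc, hNg']
    congr 2
    have : Nat.card {ξ : S // ρv (U ω) ≤ ρv (ξ • U ω) ∧ Tg (ξ • U ω) ≤ θG}
        = cntM θG (w ω) := by
      unfold cntM
      refine natCard_congr fun ξ => ?_
      rw [hTg']
      constructor
      · rintro ⟨h1, h2⟩
        refine ⟨?_, h2⟩
        show ρv ((1:S) • U ω) ≤ ρv (ξ • U ω)
        rwa [one_smul]
      · rintro ⟨h1, h2⟩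
        refine ⟨?_, h2⟩
        have h1' : ρv ((1:S) • U ω) ≤ ρv (ξ • U ω) := h1
        rwa [one_smul] at h1'
    exact_mod_cast this
  -- the event equals w ⁻¹' A
  have hevent : {ω | Tg (U ω) ≤ θG ∧ Tvc (U ω) ≤ θV} = w ⁻¹' A := by
    ext ω
    simp only [Set.mem_setOf_eq, Set.mem_preimage, hA, inA, hTgU, hTvc']
  -- shifted preimages all have the same measure
  have hBmeas : ∀ ξ : S, Measurable fun ω => shiftW ξ (w ω) := by
    intro ξ
    have : (fun ω => shiftW ξ (w ω))
        = fun ω => fun ξ' : S => (ρg ((ξ' * ξ) • U ω), ρv ((ξ' * ξ) • U ω)) := rfl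
    rw [this]
    exact measurable_pi_lambda _ fun ξ' => (hmeasg (ξ' * ξ)).prod (hmeasv (ξ' * ξ))
  have hmeq : ∀ ξ : S, μ ((fun ω => shiftW ξ (w ω)) ⁻¹' A) = μ (w ⁻¹' A) := by
    intro ξ
    rw [← Measure.map_apply (hBmeas ξ) hAmeas, ← Measure.map_apply hwmeas hAmeas]
    congr 1
    exact hinv ξ
  -- integral argument
  set x := (μ (w ⁻¹' A)).toReal with hx
  have hsum : ∀ ω : Ω, ∑ ξ : S, ((fun ω => shiftW ξ (w ω)) ⁻¹' A).indicator
      (fun _ => (1:ℝ)) ω ≤ θG * θV * Fintype.card S := by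
    intro ω
    have h1 : ∑ ξ : S, ((fun ω => shiftW ξ (w ω)) ⁻¹' A).indicator (fun _ => (1:ℝ)) ω
        = ∑ ξ : S, if inA θG θV (shiftW ξ (w ω)) then (1:ℝ) else 0 := by
      refine Finset.sum_congr rfl fun ξ _ => ?_
      rw [Set.indicator_apply]
      rfl
    rw [h1, Finset.sum_boole]
    have h2 : ((Finset.univ.filter fun ξ : S => inA θG θV (shiftW ξ (w ω))).card : ℝ)
        = (Nat.card {ξ : S // inA θG θV (shiftW ξ (w ω))} : ℝ) := by
      rw [natCard_eq_filterCard]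
    rw [h2]
    exact key_det hθG0 hθV0 (w ω)
  have hint : ∀ ξ : S, Integrable
      (((fun ω => shiftW ξ (w ω)) ⁻¹' A).indicator (fun _ => (1:ℝ))) μ :=
    fun ξ => (integrable_const (1:ℝ)).indicator ((hBmeas ξ) hAmeas)
  have hchain : (Fintype.card S : ℝ) * x ≤ θG * θV * Fintype.card S := by
    calc (Fintype.card S : ℝ) * x
        = ∑ _ξ : S, x := by rw [Finset.sum_const, Finset.card_univ, nsmul_eq_mul]
      _ = ∑ ξ : S, (μ ((fun ω => shiftW ξ (w ω)) ⁻¹' A)).toReal := by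
          refine Finset.sum_congr rfl fun ξ _ => ?_
          rw [hmeq ξ, hx]
      _ = ∑ ξ : S, ∫ ω, ((fun ω => shiftW ξ (w ω)) ⁻¹' A).indicator (fun _ => (1:ℝ)) ω ∂μ := by
          refine Finset.sum_congr rfl fun ξ _ => ?_
          exact (MeasureTheory.integral_indicator_one ((hBmeas ξ) hAmeas)).symm
      _ = ∫ ω, ∑ ξ : S, ((fun ω => shiftW ξ (w ω)) ⁻¹' A).indicator (fun _ => (1:ℝ)) ω ∂μ := by
          rw [MeasureTheory.integral_finset_sum _ fun ξ _ => hint ξ]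
      _ ≤ ∫ _ω, θG * θV * Fintype.card S ∂μ := by
          refine integral_mono (integrable_finset_sum _ fun ξ _ => hint ξ)
            (integrable_const _) fun ω => hsum ω
      _ = θG * θV * Fintype.card S := by
          simp [measure_univ]
  have hxle : x ≤ θG * θV := by nlinarith
  rw [hevent]
  exact hxle
end

section
/- Under the assumptions of the two-level asymptotic permutation test, the discovery set Â = {v : T_{g(v)}(U) ≤ θ_G, T_v^{θ_G}(U) ≤ θ_V, T_v(U) ≤ θ_V'} satisfies FWER(Â) = P(Â ∩ V₀ ≠ ∅) ≤ |V|·θ_G·θ_V + J·ν_g·θ_V'. -/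
open MeasureTheory

open scoped ENNReal
open Finset

open MeasureTheory Finset
open scoped ENNReal

/-- Count of elements satisfying a predicate, decidability-free. -/
noncomputable def cnt {ι : Type*} (p : ι → Prop) : ℕ := Nat.card {ζ : ι // p ζ}

lemma cnt_def {ι : Type*} (p : ι → Prop) : cnt p = Nat.card {ζ : ι // p ζ} := rfl

attribute [irreducible] cnt

lemma cnt_congr {ι : Type*} {p q : ι → Prop} (h : ∀ a, p a ↔ q a) : cnt p = cnt q := by
  rw [cnt_def, cnt_def]
  exact Nat.card_congr (Equiv.subtypeEquivRight h)

lemma cnt_eq_card {ι : Type*} [Fintype ι] (p : ι → Prop) [DecidablePred p] :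
    cnt p = (univ.filter p).card := by
  rw [cnt_def, Nat.card_eq_fintype_card, Fintype.card_subtype]

lemma cnt_mono {ι : Type*} [Fintype ι] {p q : ι → Prop} (h : ∀ a, p a → q a) :
    cnt p ≤ cnt q := by
  classical
  rw [cnt_eq_card, cnt_eq_card]
  apply Finset.card_le_card
  intro a ha
  simp only [mem_filter, mem_univ, true_and] at ha ⊢
  exact h a ha

lemma cnt_pos {ι : Type*} [Fintype ι] {p : ι → Prop} (a : ι) (ha : p a) : 0 < cnt p := by
  rw [cnt_def]
  have : Nonempty {x // p x} := ⟨⟨a, ha⟩⟩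
  exact Nat.card_pos

lemma cnt_le_card {ι : Type*} [Fintype ι] (p : ι → Prop) : cnt p ≤ Fintype.card ι := by
  classical
  rw [cnt_eq_card]
  exact le_trans (Finset.card_le_card (filter_subset _ _)) (le_of_eq (Finset.card_univ))

lemma cnt_shift {S : Type*} [Group S] [Fintype S] (P : S → Prop) (η : S) :
    cnt (fun ζ => P (ζ * η)) = cnt P := by
  rw [cnt_def, cnt_def]
  apply Nat.card_congr
  exact ⟨fun a => ⟨a.1 * η, a.2⟩, fun b => ⟨b.1 * η⁻¹, by simpa using b.2⟩,
    fun a => by simp, fun b => by simp⟩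

lemma cnt_rank {S : Type*} [Fintype S] (Q : S → Prop) (f : S → ℝ) (k : ℕ) :
    cnt (fun η => Q η ∧ cnt (fun ζ => Q ζ ∧ f η ≤ f ζ) ≤ k) ≤ k := by
  classical
  rw [cnt_eq_card]
  set M := univ.filter fun η => Q η ∧ cnt (fun ζ => Q ζ ∧ f η ≤ f ζ) ≤ k with hM
  rcases M.eq_empty_or_nonempty with h | h
  · simp [h]
  · obtain ⟨η₀, hη₀, hmin⟩ := M.exists_min_image f h
    obtain ⟨hQ₀, hk₀⟩ := (Finset.mem_filter.mp hη₀).2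
    have h1 : M.card ≤ cnt (fun ζ => Q ζ ∧ f η₀ ≤ f ζ) := by
      rw [cnt_eq_card]
      apply Finset.card_le_card
      intro a ha
      obtain ⟨-, hQa, -⟩ := Finset.mem_filter.mp (show a ∈ univ.filter _ by rwa [hM] at ha)
      exact Finset.mem_filter.mpr ⟨mem_univ a, hQa, hmin a ha⟩
    exact le_trans h1 hk₀
lemma cnt_rank_univ {S : Type*} [Fintype S] (f : S → ℝ) (k : ℕ) :
    cnt (fun η : S => cnt (fun ζ => f η ≤ f ζ) ≤ k) ≤ k := by
  have h0 : ∀ η : S, cnt (fun ζ : S => f η ≤ f ζ)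
      = cnt (fun ζ : S => True ∧ f η ≤ f ζ) := fun η => cnt_congr (by tauto)
  have h1 : cnt (fun η : S => cnt (fun ζ => f η ≤ f ζ) ≤ k)
      = cnt (fun η : S => True ∧ cnt (fun ζ => True ∧ f η ≤ f ζ) ≤ k) := by
    apply cnt_congr
    intro a
    rw [← h0 a]
    tauto
  rw [h1]
  exact cnt_rank (fun _ => True) f k

lemma meas_cnt {α ι : Type*} [MeasurableSpace α] [Fintype ι] (p : α → ι → Prop)
    (hp : ∀ i, MeasurableSet {y | p y i}) :
    Measurable fun y => (cnt (p y) : ℝ) := by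
  classical
  have heq : (fun y => (cnt (p y) : ℝ)) = fun y => ∑ i : ι, if p y i then (1:ℝ) else 0 := by
    funext y
    rw [cnt_eq_card, Finset.card_filter]
    push_cast
    rfl
  rw [heq]
  exact Finset.measurable_sum _ fun i _ =>
    Measurable.ite (hp i) measurable_const measurable_const

lemma key_exch {Ω S β : Type*} [MeasurableSpace Ω] (μ : Measure Ω) [IsProbabilityMeasure μ]
    [Group S] [Fintype S] [MeasurableSpace β]
    (X : Ω → S → β) (hX : Measurable X)
    (hinv : ∀ ξ : S, μ.map (fun ω => fun ξ' => X ω (ξ' * ξ)) = μ.map X)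
    (B : Set (S → β)) (hB : MeasurableSet B) (k : ℝ) (hk : 0 ≤ k)
    (hcard : ∀ x : S → β,
      (cnt (fun η : S => (fun ξ' => x (ξ' * η)) ∈ B) : ℝ) ≤ k * Fintype.card S) :
    μ (X ⁻¹' B) ≤ ENNReal.ofReal k := by
  classical
  set n := Fintype.card S with hn
  have hnpos : 0 < n := Fintype.card_pos
  have hshift : ∀ η : S, Measurable fun x : S → β => fun ξ' => x (ξ' * η) :=
    fun η => measurable_pi_lambda _ fun ξ' => measurable_pi_apply _
  have hm : ∀ η : S, Measurable fun ω => fun ξ' : S => X ω (ξ' * η) :=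
    fun η => (hshift η).comp hX
  set s : S → Set Ω := fun η => (fun ω => fun ξ' => X ω (ξ' * η)) ⁻¹' B with hs
  have hsm : ∀ η, MeasurableSet (s η) := fun η => (hm η) hB
  have hμs : ∀ η, μ (s η) = μ (X ⁻¹' B) := by
    intro η
    have h1 : (μ.map (fun ω => fun ξ' : S => X ω (ξ' * η))) B = μ (s η) :=
      Measure.map_apply (hm η) hB
    rw [← h1, hinv η, Measure.map_apply hX hB]
  have hsum : ∑ η : S, μ (s η) = (n : ℝ≥0∞) * μ (X ⁻¹' B) := by
    simp only [hμs, Finset.sum_const, nsmul_eq_mul, Finset.card_univ, hn]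
  have hbound : ∑ η : S, μ (s η) ≤ ENNReal.ofReal (k * n) := by
    have h1 : ∀ η : S, μ (s η) = ∫⁻ ω, (s η).indicator 1 ω ∂μ := by
      intro η; rw [lintegral_indicator_one (hsm η)]
    calc ∑ η : S, μ (s η) = ∫⁻ ω, ∑ η : S, (s η).indicator 1 ω ∂μ := by
          rw [lintegral_finset_sum]
          · exact Finset.sum_congr rfl fun η _ => h1 η
          · exact fun η _ => (measurable_one.indicator (hsm η))
      _ ≤ ∫⁻ _, ENNReal.ofReal (k * n) ∂μ := by
          apply lintegral_mono
          intro ω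
          simp only []
          have hpt : ∑ η : S, (s η).indicator (1 : Ω → ℝ≥0∞) ω
              = ((cnt (fun η : S => ω ∈ s η) : ℕ) : ℝ≥0∞) := by
            rw [cnt_eq_card, Finset.card_filter]
            push_cast
            refine Finset.sum_congr rfl fun η _ => ?_
            by_cases h : ω ∈ s η <;> simp [Set.indicator_apply, h]
          rw [hpt]
          have hle : (cnt (fun η : S => ω ∈ s η) : ℝ) ≤ k * n := by
            have h2 : cnt (fun η : S => ω ∈ s η)
                = cnt (fun η : S => (fun ξ' => X ω (ξ' * η)) ∈ B) :=
              cnt_congr fun η => Iff.rfl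
            rw [h2]
            exact hcard (X ω)
          rw [← ENNReal.ofReal_natCast]
          exact ENNReal.ofReal_le_ofReal hle
      _ = ENNReal.ofReal (k * n) := by simp
  rw [hsum] at hbound
  have hkn : ENNReal.ofReal (k * n) = (n : ℝ≥0∞) * ENNReal.ofReal k := by
    rw [mul_comm k, ENNReal.ofReal_mul (by positivity)]
    simp
  rw [hkn] at hbound
  have hne : (n : ℝ≥0∞) ≠ 0 := by exact_mod_cast hnpos.ne'
  exact (ENNReal.mul_le_mul_iff_right hne (by simp)).mp hbound

lemma prob_single {Ω S : Type*} [MeasurableSpace Ω] (μ : Measure Ω) [IsProbabilityMeasure μ]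
    [Group S] [Fintype S] (X : Ω → S → ℝ) (hX : Measurable X)
    (hinv : ∀ ξ : S, μ.map (fun ω => fun ξ' => X ω (ξ' * ξ)) = μ.map X)
    (θ : ℝ) (hθ : 0 ≤ θ) :
    μ {ω | (cnt (fun ζ : S => X ω 1 ≤ X ω ζ) : ℝ) / Fintype.card S ≤ θ}
      ≤ ENNReal.ofReal θ := by
  set n := Fintype.card S with hn
  have hnpos : (0:ℝ) < n := by exact_mod_cast (Fintype.card_pos : 0 < n)
  set B : Set (S → ℝ) := {x | (cnt (fun ζ : S => x 1 ≤ x ζ) : ℝ) / n ≤ θ} with hB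
  have hBm : MeasurableSet B := by
    apply measurableSet_le _ measurable_const
    exact (meas_cnt (fun (x : S → ℝ) (ζ : S) => x 1 ≤ x ζ) fun ζ =>
      measurableSet_le (measurable_pi_apply 1) (measurable_pi_apply ζ)).div_const _
  have hcard : ∀ x : S → ℝ,
      (cnt (fun η : S => (fun ξ' => x (ξ' * η)) ∈ B) : ℝ) ≤ θ * n := by
    intro x
    have hiff : ∀ η : S, ((fun ξ' => x (ξ' * η)) ∈ B
        ↔ cnt (fun ζ : S => x η ≤ x ζ) ≤ ⌊θ * n⌋₊) := by
      intro η
      have h1 : cnt (fun ζ : S => x (1 * η) ≤ x (ζ * η))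
          = cnt (fun ζ : S => x η ≤ x ζ) := by
        rw [show (fun ζ : S => x (1 * η) ≤ x (ζ * η))
            = fun ζ : S => (fun ζ' => x η ≤ x ζ') (ζ * η) by
          funext ζ; rw [one_mul]]
        exact cnt_shift (fun ζ' => x η ≤ x ζ') η
      simp only [hB, Set.mem_setOf_eq, h1]
      rw [div_le_iff₀ hnpos, Nat.le_floor_iff (by positivity)]
    have h2 : cnt (fun η : S => (fun ξ' => x (ξ' * η)) ∈ B)
        = cnt (fun η : S => cnt (fun ζ : S => x η ≤ x ζ) ≤ ⌊θ * n⌋₊) :=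
      cnt_congr hiff
    rw [h2]
    calc (cnt (fun η : S => cnt (fun ζ : S => x η ≤ x ζ) ≤ ⌊θ * n⌋₊) : ℝ)
        ≤ (⌊θ * n⌋₊ : ℝ) := by exact_mod_cast cnt_rank_univ x ⌊θ * n⌋₊
      _ ≤ θ * n := Nat.floor_le (by positivity)
  exact key_exch μ X hX hinv B hBm θ hθ hcard

noncomputable def Gf {S : Type*} [Fintype S] (y : S → ℝ × ℝ) (η : S) : ℝ :=
  (cnt (fun ζ : S => (y η).1 ≤ (y ζ).1) : ℝ) / Fintype.card S

noncomputable def Pf {S : Type*} [Fintype S] (θG : ℝ) (y : S → ℝ × ℝ) (η : S) : ℝ :=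
  (cnt (fun ζ : S => Gf y ζ ≤ θG ∧ (y η).2 ≤ (y ζ).2) : ℝ) / Fintype.card S
    / ((cnt (fun ζ : S => Gf y ζ ≤ θG) : ℝ) / Fintype.card S)

lemma prob_pair {Ω S : Type*} [MeasurableSpace Ω] (μ : Measure Ω) [IsProbabilityMeasure μ]
    [Group S] [Fintype S] (X : Ω → S → ℝ × ℝ) (hX : Measurable X)
    (hinv : ∀ ξ : S, μ.map (fun ω => fun ξ' => X ω (ξ' * ξ)) = μ.map X)
    (θG θV : ℝ) (hθG : 0 ≤ θG) (hθV : 0 ≤ θV) :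
    μ {ω | Gf (X ω) 1 ≤ θG ∧ Pf θG (X ω) 1 ≤ θV} ≤ ENNReal.ofReal (θG * θV) := by
  set n := Fintype.card S with hn
  have hnpos : (0:ℝ) < n := by exact_mod_cast (Fintype.card_pos : 0 < n)
  set B : Set (S → ℝ × ℝ) := {y | Gf y 1 ≤ θG ∧ Pf θG y 1 ≤ θV} with hB
  have hGf : ∀ η : S, Measurable fun y : S → ℝ × ℝ => Gf y η := by
    intro η
    unfold Gf
    exact (meas_cnt _ fun ζ => measurableSet_le
      ((measurable_pi_apply η).fst) ((measurable_pi_apply ζ).fst)).div_const _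
  have hNmem : ∀ ζ : S, MeasurableSet {y : S → ℝ × ℝ | Gf y ζ ≤ θG} :=
    fun ζ => measurableSet_le (hGf ζ) measurable_const
  have hBm : MeasurableSet B := by
    have hnum : Measurable fun y : S → ℝ × ℝ =>
        (cnt (fun ζ : S => Gf y ζ ≤ θG ∧ (y 1).2 ≤ (y ζ).2) : ℝ) := by
      refine meas_cnt _ fun ζ => ?_
      have hb : MeasurableSet {y : S → ℝ × ℝ | (y 1).2 ≤ (y ζ).2} :=
        measurableSet_le ((measurable_pi_apply 1).snd) ((measurable_pi_apply ζ).snd)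
      exact (hNmem ζ).inter hb
    have hden : Measurable fun y : S → ℝ × ℝ => (cnt (fun ζ : S => Gf y ζ ≤ θG) : ℝ) :=
      meas_cnt _ fun ζ => hNmem ζ
    have hPf : Measurable fun y : S → ℝ × ℝ => Pf θG y 1 := by
      unfold Pf
      exact (hnum.div_const _).div (hden.div_const _)
    exact (measurableSet_le (hGf 1) measurable_const).inter
      (measurableSet_le hPf measurable_const)
  apply key_exch μ X hX hinv B hBm _ (by positivity)
  intro y
  set g : S → ℝ := fun ζ => (y ζ).1 with hg
  set f : S → ℝ := fun ζ => (y ζ).2 with hf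
  set Q : S → Prop := fun ζ => Gf y ζ ≤ θG with hQ
  set m : ℕ := cnt Q with hm
  have hGshift : ∀ η ζ : S, Gf (fun ξ' => y (ξ' * η)) ζ = Gf y (ζ * η) := by
    intro η ζ
    unfold Gf
    congr 1
    norm_cast
    exact cnt_shift (fun ζ' => (y (ζ * η)).1 ≤ (y ζ').1) η
  have hmfloor : m ≤ ⌊θG * n⌋₊ := by
    have heq : m = cnt (fun ζ : S => cnt (fun ζ' : S => g ζ ≤ g ζ') ≤ ⌊θG * n⌋₊) := by
      rw [hm]
      apply cnt_congr
      intro ζ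
      rw [hQ]
      show Gf y ζ ≤ θG ↔ _
      unfold Gf
      rw [div_le_iff₀ hnpos, Nat.le_floor_iff (by positivity)]
    rw [heq]
    exact cnt_rank_univ g ⌊θG * n⌋₊
  have hmθG : (m : ℝ) ≤ θG * n :=
    le_trans (by exact_mod_cast hmfloor) (Nat.floor_le (by positivity))
  set k : ℕ := ⌊θV * m⌋₊ with hk
  have hiff : ∀ η : S, ((fun ξ' => y (ξ' * η)) ∈ B
      ↔ (Q η ∧ cnt (fun ζ => Q ζ ∧ f η ≤ f ζ) ≤ k)) := by
    intro η
    have hGs : ∀ ζ : S, Gf (fun ξ' => y (ξ' * η)) ζ = Gf y (ζ * η) := hGshift η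
    have hGs1 : Gf (fun ξ' => y (ξ' * η)) 1 = Gf y η := by rw [hGs, one_mul]
    have hdenshift : cnt (fun ζ : S => Gf (fun ξ' => y (ξ' * η)) ζ ≤ θG) = m := by
      rw [hm, hQ]
      rw [show (fun ζ : S => Gf (fun ξ' => y (ξ' * η)) ζ ≤ θG)
          = fun ζ : S => (fun ζ' => Gf y ζ' ≤ θG) (ζ * η) by
        funext ζ; rw [hGs]]
      exact cnt_shift (fun ζ' => Gf y ζ' ≤ θG) η
    have hnumshift : cnt (fun ζ : S => Gf (fun ξ' => y (ξ' * η)) ζ ≤ θG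
          ∧ ((fun ξ' : S => y (ξ' * η)) 1).2 ≤ ((fun ξ' : S => y (ξ' * η)) ζ).2)
        = cnt (fun ζ => Q ζ ∧ f η ≤ f ζ) := by
      rw [show (fun ζ : S => Gf (fun ξ' => y (ξ' * η)) ζ ≤ θG
            ∧ ((fun ξ' : S => y (ξ' * η)) 1).2 ≤ ((fun ξ' : S => y (ξ' * η)) ζ).2)
          = fun ζ : S => (fun ζ' => Q ζ' ∧ f η ≤ f ζ') (ζ * η) by
        funext ζ
        simp only [hGs, one_mul, hQ, hf]]
      exact cnt_shift (fun ζ' => Q ζ' ∧ f η ≤ f ζ') η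
    have hPshift : Pf θG (fun ξ' => y (ξ' * η)) 1
        = (cnt (fun ζ => Q ζ ∧ f η ≤ f ζ) : ℝ) / n / ((m : ℝ) / n) := by
      unfold Pf
      rw [hnumshift, hdenshift]
    have hQη : Q η ↔ Gf y η ≤ θG := Iff.rfl
    constructor
    · rintro ⟨h1, h2⟩
      rw [hGs1] at h1
      have hηQ : Q η := h1
      have hmpos : (0:ℝ) < m := by
        have : 0 < m := cnt_pos η hηQ
        exact_mod_cast this
      rw [hPshift] at h2
      have h3 : (cnt (fun ζ => Q ζ ∧ f η ≤ f ζ) : ℝ) / n / ((m : ℝ) / n)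
          = (cnt (fun ζ => Q ζ ∧ f η ≤ f ζ) : ℝ) / m := by
        field_simp
      rw [h3, div_le_iff₀ hmpos] at h2
      exact ⟨hηQ, Nat.le_floor (by exact_mod_cast h2)⟩
    · rintro ⟨hηQ, h2⟩
      have hmpos : (0:ℝ) < m := by
        have : 0 < m := cnt_pos η hηQ
        exact_mod_cast this
      refine ⟨by rw [hGs1]; exact hηQ, ?_⟩
      rw [hPshift]
      have h3 : (cnt (fun ζ => Q ζ ∧ f η ≤ f ζ) : ℝ) / n / ((m : ℝ) / n)
          = (cnt (fun ζ => Q ζ ∧ f η ≤ f ζ) : ℝ) / m := by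
        field_simp
      rw [h3, div_le_iff₀ hmpos]
      calc (cnt (fun ζ => Q ζ ∧ f η ≤ f ζ) : ℝ) ≤ (k : ℝ) := by exact_mod_cast h2
        _ ≤ θV * m := Nat.floor_le (by positivity)
  have heq : cnt (fun η : S => (fun ξ' => y (ξ' * η)) ∈ B)
      = cnt (fun η : S => Q η ∧ cnt (fun ζ => Q ζ ∧ f η ≤ f ζ) ≤ k) :=
    cnt_congr hiff
  rw [heq]
  calc (cnt (fun η : S => Q η ∧ cnt (fun ζ => Q ζ ∧ f η ≤ f ζ) ≤ k) : ℝ)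
      ≤ (k : ℝ) := by exact_mod_cast cnt_rank Q f k
    _ ≤ θV * m := Nat.floor_le (by positivity)
    _ ≤ θV * (θG * n) := by nlinarith
    _ = θG * θV * n := by ring

/-- Corollary 3 (FWER of the asymptotic two-level permutation test): with cell- and
index-level permutation p-values `T_g`, `T_v`, conditional p-values `T_v^{θ_G}`,
invariance holding for null indices and doubly-null indices, `J` the number of active
cells and `ν` the maximal cell size, the discovery set
`Â = {v : T_{g(v)}(U) ≤ θ_G, T_v^{θ_G}(U) ≤ θ_V, T_v(U) ≤ θ_V'}` satisfies
`P(Â ∩ V₀ ≠ ∅) ≤ |V|·θ_G·θ_V + J·ν·θ_V'`. -/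
theorem stmt_10 {Ω S 𝒰 V C : Type*} [MeasurableSpace Ω] (μ : Measure Ω)
    [IsProbabilityMeasure μ] [Group S] [Fintype S] [MulAction S 𝒰]
    [Fintype V] [Fintype C] [DecidableEq C]
    (cell : V → C) (A : Finset V)
    (U : Ω → 𝒰) (ρg : C → 𝒰 → ℝ) (ρv : V → 𝒰 → ℝ)
    (hmeasg : ∀ (c : C) (ξ : S), Measurable (fun ω => ρg c (ξ • U ω)))
    (hmeasv : ∀ (v : V) (ξ : S), Measurable (fun ω => ρv v (ξ • U ω)))
    -- invariance for null indices
    (hinv0 : ∀ v : V, v ∉ A → ∀ ξ : S,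
      μ.map (fun ω => fun ξ' : S => ρv v ((ξ' * ξ) • U ω))
        = μ.map (fun ω => fun ξ' : S => ρv v (ξ' • U ω)))
    -- joint invariance for indices in inactive cells
    (hinv00 : ∀ v : V, (∀ w : V, cell w = cell v → w ∉ A) → ∀ ξ : S,
      μ.map (fun ω => fun ξ' : S =>
          (ρg (cell v) ((ξ' * ξ) • U ω), ρv v ((ξ' * ξ) • U ω)))
        = μ.map (fun ω => fun ξ' : S => (ρg (cell v) (ξ' • U ω), ρv v (ξ' • U ω))))
    (θG θV θV' : ℝ) (hθG : θG ∈ Set.Icc (0 : ℝ) 1) (hθV : θV ∈ Set.Icc (0 : ℝ) 1)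
    (hθV' : θV' ∈ Set.Icc (0 : ℝ) 1)
    (Tg : C → 𝒰 → ℝ) (Tv Tvc : V → 𝒰 → ℝ)
    (hTg : ∀ c u, Tg c u
      = (Nat.card {ξ : S // ρg c u ≤ ρg c (ξ • u)} : ℝ) / Fintype.card S)
    (hTv : ∀ v u, Tv v u
      = (Nat.card {ξ : S // ρv v u ≤ ρv v (ξ • u)} : ℝ) / Fintype.card S)
    (hTvc : ∀ v u, Tvc v u
      = ((Nat.card {ξ : S // ρv v u ≤ ρv v (ξ • u) ∧ Tg (cell v) (ξ • u) ≤ θG} : ℝ)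
            / Fintype.card S)
          / ((Nat.card {ξ : S // Tg (cell v) (ξ • u) ≤ θG} : ℝ) / Fintype.card S))
    (νg J : ℕ)
    (hν : ∀ c : C, (Finset.univ.filter (fun v : V => cell v = c)).card ≤ νg)
    (hJ : (Finset.univ.filter (fun c : C => ∃ v ∈ A, cell v = c)).card = J) :
    (μ (⋃ v ∈ {v : V | v ∉ A},
        {ω | Tg (cell v) (U ω) ≤ θG ∧ Tvc v (U ω) ≤ θV ∧ Tv v (U ω) ≤ θV'})).toReal
      ≤ (Fintype.card V : ℝ) * θG * θV + (J : ℝ) * (νg : ℝ) * θV' := by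
  obtain ⟨hθG0, hθG1⟩ := hθG
  obtain ⟨hθV0, hθV1⟩ := hθV
  obtain ⟨hθV'0, hθV'1⟩ := hθV'
  letI instA : DecidablePred (fun v : V => v ∉ A) := fun v => Classical.propDecidable _
  set V0 : Finset V := univ.filter (fun v : V => v ∉ A) with hV0
  set E : V → Set Ω := fun v =>
    {ω | Tg (cell v) (U ω) ≤ θG ∧ Tvc v (U ω) ≤ θV ∧ Tv v (U ω) ≤ θV'} with hE
  have hUeq : (⋃ v ∈ {v : V | v ∉ A},
      {ω | Tg (cell v) (U ω) ≤ θG ∧ Tvc v (U ω) ≤ θV ∧ Tv v (U ω) ≤ θV'})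
      = ⋃ v ∈ V0, E v := by
    ext ω
    simp only [Set.mem_iUnion, Set.mem_setOf_eq, hV0, hE, Finset.mem_filter,
      Finset.mem_univ, true_and, Finset.mem_coe]
  -- single-level bound, valid for all v ∉ A
  have hEsingle : ∀ v ∈ V0, μ (E v) ≤ ENNReal.ofReal θV' := by
    intro v hv
    have hvA : v ∉ A := by
      have := Finset.mem_filter.mp (by rwa [hV0] at hv)
      exact this.2
    have hXm : Measurable (fun ω => fun ξ' : S => ρv v (ξ' • U ω)) :=
      measurable_pi_lambda _ fun ξ' => hmeasv v ξ'
    have hkey := prob_single μ (fun ω (ξ' : S) => ρv v (ξ' • U ω)) hXm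
      (hinv0 v hvA) θV' hθV'0
    refine le_trans (measure_mono ?_) hkey
    intro ω hω
    obtain ⟨-, -, h3⟩ := hω
    show (cnt (fun ζ : S => ρv v ((1:S) • U ω) ≤ ρv v (ζ • U ω)) : ℝ)
        / Fintype.card S ≤ θV'
    have hcnt : Nat.card {ξ : S // ρv v (U ω) ≤ ρv v (ξ • U ω)}
        = cnt (fun ζ : S => ρv v ((1:S) • U ω) ≤ ρv v (ζ • U ω)) := by
      rw [cnt_def]
      exact Nat.card_congr (Equiv.subtypeEquivRight (fun ξ => by rw [one_smul]))
    rw [hTv, hcnt] at h3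
    exact h3
  -- two-level bound, valid when the whole cell is null
  have hEpair : ∀ v : V, (∀ w : V, cell w = cell v → w ∉ A) →
      μ (E v) ≤ ENNReal.ofReal (θG * θV) := by
    intro v hnull
    have hXm : Measurable (fun ω => fun ξ' : S =>
        (ρg (cell v) (ξ' • U ω), ρv v (ξ' • U ω))) :=
      measurable_pi_lambda _ fun ξ' => Measurable.prodMk (hmeasg _ ξ') (hmeasv v ξ')
    have hkey := prob_pair μ
      (fun ω (ξ' : S) => (ρg (cell v) (ξ' • U ω), ρv v (ξ' • U ω))) hXm
      (hinv00 v hnull) θG θV hθG0 hθV0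
    refine le_trans (measure_mono ?_) hkey
    intro ω hω
    obtain ⟨h1, h2, -⟩ := hω
    set y : S → ℝ × ℝ := fun ξ' => (ρg (cell v) (ξ' • U ω), ρv v (ξ' • U ω)) with hy
    have hTgeq : ∀ ξ : S, Tg (cell v) (ξ • U ω) = Gf y ξ := by
      intro ξ
      rw [hTg]
      unfold Gf
      congr 1
      have e1 : Nat.card {ξ' : S // ρg (cell v) (ξ • U ω) ≤ ρg (cell v) (ξ' • ξ • U ω)}
          = cnt (fun ζ : S => (y ξ).1 ≤ (y (ζ * ξ)).1) := by
        rw [cnt_def]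
        exact Nat.card_congr (Equiv.subtypeEquivRight (fun ξ' => by
          simp only [hy, mul_smul]))
      have e2 := cnt_shift (fun ζ : S => (y ξ).1 ≤ (y ζ).1) ξ
      exact_mod_cast e1.trans e2
    show Gf y 1 ≤ θG ∧ Pf θG y 1 ≤ θV
    constructor
    · have h1' := hTgeq 1
      rw [one_smul] at h1'
      rw [← h1']
      exact h1
    · have enum : Nat.card {ξ : S // ρv v (U ω) ≤ ρv v (ξ • U ω)
          ∧ Tg (cell v) (ξ • U ω) ≤ θG}
          = cnt (fun ζ : S => Gf y ζ ≤ θG ∧ (y 1).2 ≤ (y ζ).2) := by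
        rw [cnt_def]
        refine Nat.card_congr (Equiv.subtypeEquivRight (fun ξ => ?_))
        rw [hTgeq ξ]
        have : (y 1).2 = ρv v (U ω) := by simp [hy, one_smul]
        rw [this]
        exact and_comm
      have eden : Nat.card {ξ : S // Tg (cell v) (ξ • U ω) ≤ θG}
          = cnt (fun ζ : S => Gf y ζ ≤ θG) := by
        rw [cnt_def]
        exact Nat.card_congr (Equiv.subtypeEquivRight (fun ξ => by rw [hTgeq ξ]))
      rw [hTvc, enum, eden] at h2
      exact h2
  -- split V0 into doubly-null and singly-null indices
  letI instP : DecidablePred (fun v : V => ∀ w : V, cell w = cell v → w ∉ A) :=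
    fun v => Classical.propDecidable _
  set F1 : Finset V := V0.filter (fun v : V => ∀ w : V, cell w = cell v → w ∉ A) with hF1
  set F2 : Finset V := V0.filter (fun v : V => ¬ ∀ w : V, cell w = cell v → w ∉ A) with hF2
  have hsplit : ∑ v ∈ V0, μ (E v) = ∑ v ∈ F1, μ (E v) + ∑ v ∈ F2, μ (E v) :=
    (Finset.sum_filter_add_sum_filter_not V0 _ _).symm
  have hb1 : ∑ v ∈ F1, μ (E v)
      ≤ (Fintype.card V : ℝ≥0∞) * ENNReal.ofReal (θG * θV) := by
    calc ∑ v ∈ F1, μ (E v) ≤ ∑ _v ∈ F1, ENNReal.ofReal (θG * θV) :=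
          Finset.sum_le_sum fun v hv => hEpair v (Finset.mem_filter.mp hv).2
      _ = (F1.card : ℝ≥0∞) * ENNReal.ofReal (θG * θV) := by
          rw [Finset.sum_const, nsmul_eq_mul]
      _ ≤ (Fintype.card V : ℝ≥0∞) * ENNReal.ofReal (θG * θV) := by
          apply mul_le_mul_left
          exact_mod_cast Nat.cast_le.mpr (Finset.card_le_univ F1)
  letI : DecidableEq V := Classical.decEq V
  have hcardF2 : F2.card ≤ J * νg := by
    have hsub2 : F2 ⊆ (univ.filter (fun c : C => ∃ v ∈ A, cell v = c)).biUnion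
        (fun c => univ.filter (fun v : V => cell v = c)) := by
      intro v hv
      have hpred : ¬ ∀ w : V, cell w = cell v → w ∉ A := (Finset.mem_filter.mp hv).2
      push_neg at hpred
      obtain ⟨w, hwc, hwA⟩ := hpred
      exact Finset.mem_biUnion.mpr ⟨cell v,
        Finset.mem_filter.mpr ⟨Finset.mem_univ _, ⟨w, hwA, hwc⟩⟩,
        Finset.mem_filter.mpr ⟨Finset.mem_univ _, rfl⟩⟩
    calc F2.card ≤ _ := Finset.card_le_card hsub2
      _ ≤ ∑ c ∈ univ.filter (fun c : C => ∃ v ∈ A, cell v = c),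
            (univ.filter (fun v : V => cell v = c)).card := Finset.card_biUnion_le
      _ ≤ ∑ _c ∈ univ.filter (fun c : C => ∃ v ∈ A, cell v = c), νg :=
          Finset.sum_le_sum fun c _ => hν c
      _ = J * νg := by rw [Finset.sum_const, hJ, smul_eq_mul]
  have hb2 : ∑ v ∈ F2, μ (E v) ≤ ((J * νg : ℕ) : ℝ≥0∞) * ENNReal.ofReal θV' := by
    calc ∑ v ∈ F2, μ (E v) ≤ ∑ _v ∈ F2, ENNReal.ofReal θV' :=
          Finset.sum_le_sum fun v hv => hEsingle v (Finset.filter_subset _ _ hv)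
      _ = (F2.card : ℝ≥0∞) * ENNReal.ofReal θV' := by
          rw [Finset.sum_const, nsmul_eq_mul]
      _ ≤ ((J * νg : ℕ) : ℝ≥0∞) * ENNReal.ofReal θV' := by
          apply mul_le_mul_left
          exact_mod_cast Nat.cast_le.mpr hcardF2
  have hμle : μ (⋃ v ∈ {v : V | v ∉ A},
      {ω | Tg (cell v) (U ω) ≤ θG ∧ Tvc v (U ω) ≤ θV ∧ Tv v (U ω) ≤ θV'})
      ≤ ENNReal.ofReal ((Fintype.card V : ℝ) * θG * θV + (J : ℝ) * (νg : ℝ) * θV') := by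
    rw [hUeq]
    refine le_trans (measure_biUnion_finset_le V0 E) ?_
    rw [hsplit]
    refine le_trans (add_le_add hb1 hb2) ?_
    have e1 : (Fintype.card V : ℝ≥0∞) * ENNReal.ofReal (θG * θV)
        = ENNReal.ofReal ((Fintype.card V : ℝ) * θG * θV) := by
      rw [← ENNReal.ofReal_natCast, ← ENNReal.ofReal_mul (by positivity)]
      ring_nf
    have e2 : ((J * νg : ℕ) : ℝ≥0∞) * ENNReal.ofReal θV'
        = ENNReal.ofReal ((J : ℝ) * (νg : ℝ) * θV') := by
      rw [← ENNReal.ofReal_natCast, ← ENNReal.ofReal_mul (by positivity)]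
      push_cast
      ring_nf
    rw [e1, e2, ← ENNReal.ofReal_add (by positivity) (by positivity)]
  exact ENNReal.toReal_le_of_le_ofReal (by positivity) hμle
end

section
/- Let p be uniformly distributed on [0, a] for some a ∈ (0,1], and conditionally on p let N ∼ Binomial(K, p). Then for θ ∈ [0,1], P(N ≤ K·a·θ) ≤ (⌊K·a·θ⌋ + 1)/((K+1)·a) ≤ (K·a·θ + 1)/((K+1)·a). -/
open MeasureTheory

private lemma prod_fact_aux (j : ℕ) : ∀ m : ℕ,
    (j.factorial : ℂ) * ∏ i ∈ Finset.range m, ((j : ℂ) + 1 + i) = ((j + m).factorial : ℂ)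
  | 0 => by simp
  | m + 1 => by
    rw [Finset.prod_range_succ, ← mul_assoc, prod_fact_aux j m]
    have : (j + (m + 1)).factorial = (j + m + 1) * (j + m).factorial := by
      rw [← Nat.factorial_succ]; ring_nf
    rw [this]
    push_cast
    ring

private lemma beta_eval (K j : ℕ) (hj : j ≤ K) :
    ∫ x in (0:ℝ)..1, x ^ j * (1 - x) ^ (K - j)
      = (j.factorial * (K - j).factorial : ℝ) / (K + 1).factorial := by
  set n := K - j with hn
  have hjn : j + n = K := by omega
  have h1 : Complex.betaIntegral ((j : ℂ) + 1) ((n : ℂ) + 1)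
      = ((∫ x in (0:ℝ)..1, x ^ j * (1 - x) ^ n : ℝ) : ℂ) := by
    rw [Complex.betaIntegral, ← intervalIntegral.integral_ofReal]
    refine intervalIntegral.integral_congr fun x hx => ?_
    rw [add_sub_cancel_right, add_sub_cancel_right, Complex.cpow_natCast,
      Complex.cpow_natCast]
    push_cast
    ring
  have hu : 0 < Complex.re ((j : ℂ) + 1) := by
    simp only [Complex.add_re, Complex.natCast_re, Complex.one_re]
    positivity
  have h2 := Complex.betaIntegral_eval_nat_add_one_right hu n
  have h3 := prod_fact_aux j (n + 1)
  have hjfac : (j.factorial : ℂ) ≠ 0 := by exact_mod_cast j.factorial_ne_zero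
  have hKfac : ((K + 1).factorial : ℂ) ≠ 0 := by exact_mod_cast (K + 1).factorial_ne_zero
  have hprod : ∏ i ∈ Finset.range (n + 1), ((j : ℂ) + 1 + i)
      = ((K + 1).factorial : ℂ) / (j.factorial : ℂ) := by
    have : j + (n + 1) = K + 1 := by omega
    rw [this] at h3
    field_simp [← h3]
    linear_combination h3
  rw [hprod] at h2
  rw [h2] at h1
  have : ((n.factorial : ℂ) / (((K + 1).factorial : ℂ) / (j.factorial : ℂ)))
      = (((j.factorial * n.factorial : ℝ) / (K + 1).factorial : ℝ) : ℂ) := by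
    push_cast
    field_simp
  rw [this] at h1
  exact_mod_cast h1.symm

private lemma integrand_bound (K j : ℕ) (hj : j ≤ K) (a : ℝ) (ha : 0 < a) (ha1 : a ≤ 1) :
    ∫ t in Set.Icc (0:ℝ) a, (1 / a) * (Nat.choose K j : ℝ) * t ^ j * (1 - t) ^ (K - j)
      ≤ 1 / (((K : ℝ) + 1) * a) := by
  have hcont : Continuous fun t : ℝ => t ^ j * (1 - t) ^ (K - j) := by continuity
  have hint : IntegrableOn (fun t : ℝ => t ^ j * (1 - t) ^ (K - j)) (Set.Icc (0:ℝ) 1) :=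
    hcont.integrableOn_Icc
  have hmono : ∫ t in Set.Icc (0:ℝ) a, t ^ j * (1 - t) ^ (K - j)
      ≤ ∫ t in Set.Icc (0:ℝ) 1, t ^ j * (1 - t) ^ (K - j) := by
    refine setIntegral_mono_set hint ?_ ?_
    · filter_upwards [ae_restrict_mem measurableSet_Icc] with t ht
      have h1 : (0:ℝ) ≤ t := ht.1
      have h2 : (0:ℝ) ≤ 1 - t := by linarith [ht.2]
      exact mul_nonneg (pow_nonneg h1 _) (pow_nonneg h2 _)
    · exact HasSubset.Subset.eventuallyLE (Set.Icc_subset_Icc le_rfl ha1)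
  have hval : ∫ t in Set.Icc (0:ℝ) 1, t ^ j * (1 - t) ^ (K - j)
      = (j.factorial * (K - j).factorial : ℝ) / (K + 1).factorial := by
    rw [MeasureTheory.integral_Icc_eq_integral_Ioc,
      ← intervalIntegral.integral_of_le (by norm_num : (0:ℝ) ≤ 1)]
    exact beta_eval K j hj
  have hchoose : (Nat.choose K j : ℝ) * (j.factorial : ℝ) * ((K - j).factorial : ℝ)
      = (K.factorial : ℝ) := by
    exact_mod_cast congrArg (Nat.cast (R := ℝ)) (Nat.choose_mul_factorial_mul_factorial hj)
  calc ∫ t in Set.Icc (0:ℝ) a, (1 / a) * (Nat.choose K j : ℝ) * t ^ j * (1 - t) ^ (K - j)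
      = (1 / a) * (Nat.choose K j : ℝ)
          * ∫ t in Set.Icc (0:ℝ) a, t ^ j * (1 - t) ^ (K - j) := by
        rw [← MeasureTheory.integral_const_mul]
        congr 1; ext t; ring
    _ ≤ (1 / a) * (Nat.choose K j : ℝ)
          * ((j.factorial * (K - j).factorial : ℝ) / (K + 1).factorial) := by
        rw [← hval]
        have hC : (0:ℝ) ≤ (1 / a) * (Nat.choose K j : ℝ) := by positivity
        exact mul_le_mul_of_nonneg_left hmono hC
    _ = 1 / (((K : ℝ) + 1) * a) := by
        have hKf : ((K + 1).factorial : ℝ) = ((K : ℝ) + 1) * (K.factorial : ℝ) := by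
          rw [Nat.factorial_succ]; push_cast; ring
        have hKfpos : (0:ℝ) < (K.factorial : ℝ) := by exact_mod_cast K.factorial_pos
        rw [hKf]
        field_simp
        linear_combination hchoose

/-- Binomial count with uniform success probability on `[0,a]`: if `p` is uniform on
`[0,a]` (`0 < a ≤ 1`) and, conditionally on `p`, `N ∼ Binomial(K,p)` (encoded through
the joint law of `(N, p)`), then for `θ ∈ [0,1]`,
`P(N ≤ K·a·θ) ≤ (⌊K·a·θ⌋+1)/((K+1)·a) ≤ (K·a·θ+1)/((K+1)·a)`. -/
theorem stmt_13 {Ω : Type*} [MeasurableSpace Ω] (μ : Measure Ω) [IsProbabilityMeasure μ]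
    (K : ℕ) (hK : 1 ≤ K) (a : ℝ) (ha : 0 < a) (ha1 : a ≤ 1)
    (p : Ω → ℝ) (N : Ω → ℕ) (hp : Measurable p) (hN : Measurable N)
    (hjoint : ∀ (j : ℕ) (s : Set ℝ), MeasurableSet s →
      μ {ω | N ω = j ∧ p ω ∈ s}
        = ENNReal.ofReal
            (∫ t in s ∩ Set.Icc (0 : ℝ) a,
              (1 / a) * (Nat.choose K j : ℝ) * t ^ j * (1 - t) ^ (K - j)))
    (θ : ℝ) (hθ : θ ∈ Set.Icc (0 : ℝ) 1) :
    (μ {ω | (N ω : ℝ) ≤ (K : ℝ) * a * θ}).toReal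
        ≤ ((Nat.floor ((K : ℝ) * a * θ) : ℝ) + 1) / (((K : ℝ) + 1) * a) ∧
      ((Nat.floor ((K : ℝ) * a * θ) : ℝ) + 1) / (((K : ℝ) + 1) * a)
        ≤ ((K : ℝ) * a * θ + 1) / (((K : ℝ) + 1) * a) := by
  obtain ⟨hθ0, hθ1⟩ := hθ
  have hKaθ : (0:ℝ) ≤ (K : ℝ) * a * θ := by positivity
  set m := Nat.floor ((K : ℝ) * a * θ) with hm
  have hmK : m ≤ K := by
    have haθ : a * θ ≤ 1 := mul_le_one₀ ha1 hθ0 hθ1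
    have h1 : (K : ℝ) * a * θ ≤ (K : ℝ) := by
      nlinarith [mul_nonneg (Nat.cast_nonneg (α := ℝ) K) (sub_nonneg.mpr haθ)]
    calc m ≤ Nat.floor ((K : ℝ)) := Nat.floor_le_floor h1
      _ = K := Nat.floor_natCast K
  have hden : (0:ℝ) < ((K : ℝ) + 1) * a := by positivity
  constructor
  · -- main bound
    have hsub : {ω | (N ω : ℝ) ≤ (K : ℝ) * a * θ}
        ⊆ ⋃ j ∈ Finset.range (m + 1), {ω | N ω = j} := by
      intro ω hω
      have : N ω ≤ m := Nat.le_floor hω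
      simp only [Set.mem_iUnion, Finset.mem_range, Set.mem_setOf_eq]
      exact ⟨N ω, by omega, rfl⟩
    have hbound : ∀ j ∈ Finset.range (m + 1),
        μ {ω | N ω = j} ≤ ENNReal.ofReal (1 / (((K : ℝ) + 1) * a)) := by
      intro j hj
      have hjK : j ≤ K := by
        have : j < m + 1 := Finset.mem_range.mp hj
        omega
      have h := hjoint j Set.univ MeasurableSet.univ
      simp only [Set.mem_univ, and_true, Set.univ_inter] at h
      rw [h]
      exact ENNReal.ofReal_le_ofReal (integrand_bound K j hjK a ha ha1)
    have hμ : μ {ω | (N ω : ℝ) ≤ (K : ℝ) * a * θ}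
        ≤ ENNReal.ofReal (((m : ℝ) + 1) / (((K : ℝ) + 1) * a)) := by
      calc μ {ω | (N ω : ℝ) ≤ (K : ℝ) * a * θ}
          ≤ μ (⋃ j ∈ Finset.range (m + 1), {ω | N ω = j}) := measure_mono hsub
        _ ≤ ∑ j ∈ Finset.range (m + 1), μ {ω | N ω = j} := measure_biUnion_finset_le _ _
        _ ≤ ∑ j ∈ Finset.range (m + 1), ENNReal.ofReal (1 / (((K : ℝ) + 1) * a)) :=
            Finset.sum_le_sum hbound
        _ = ((m + 1 : ℕ) : ENNReal) * ENNReal.ofReal (1 / (((K : ℝ) + 1) * a)) := by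
            rw [Finset.sum_const, Finset.card_range, nsmul_eq_mul]
        _ = ENNReal.ofReal (((m + 1 : ℕ) : ℝ) * (1 / (((K : ℝ) + 1) * a))) := by
            rw [← ENNReal.ofReal_natCast (m + 1), ← ENNReal.ofReal_mul (by positivity)]
        _ = ENNReal.ofReal (((m : ℝ) + 1) / (((K : ℝ) + 1) * a)) := by
            congr 1
            push_cast
            ring
    refine ENNReal.toReal_le_of_le_ofReal (by positivity) hμ
  · -- trivial comparison
    gcongr
    exact Nat.floor_le hKaθ
end
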